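/- arXiv:1210.3048 — 3 statements merged into one kernel-verified Lean document; each statement's English description precedes it below -/
import Mathlib

section
/- Let X be a shift space over a finite alphabet 𝒜 and let a ∈ 𝒜. If there exists N ∈ ℕ such that a^N ∉ B(X), then X is flow equivalent to X^{a↦aa}; moreover the 1-block code that fixes every letter of 𝒜 and sends ◇ to a restricts to a conjugacy from X^{a↦a◇} onto X^{a↦aa}. -/
namespace SymbolicDynamics

/-! ### Basic symbolic dynamics set-up

All shift spaces are realized inside the full shift over the countable ambient
alphabet `ℕ`; an actual shift space uses only a finite subset of `ℕ` as its
alphabet.  This gives a uniform setting in which shift spaces over varying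
finite alphabets can be compared (as required by flow equivalence). -/

/-- Biinfinite sequences over the ambient alphabet `ℕ`. -/
abbrev Seq : Type := ℤ → ℕ

/-- The shift map `σ`, `(σ x) i = x (i+1)`. -/
def shift (x : Seq) : Seq := fun i => x (i + 1)

/-- The word `x_i x_{i+1} ⋯ x_{i+n-1}` of length `n` occurring in `x` at position `i`. -/
def wordAt (x : Seq) (i : ℤ) (n : ℕ) : List ℕ :=
  List.ofFn fun k : Fin n => x (i + (k.val : ℤ))

/-- `w` occurs as a factor of the biinfinite sequence `x`. -/
def FactorOf (w : List ℕ) (x : Seq) : Prop := ∃ i : ℤ, wordAt x i w.length = w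

/-- The language `B(X)`: all finite words occurring in points of `X`. -/
def lang (X : Set Seq) : Set (List ℕ) := {w | ∃ x ∈ X, FactorOf w x}

/-- `X_F`: the set of biinfinite sequences containing no word of `F` as a factor. -/
def XF (F : Set (List ℕ)) : Set Seq := {x | ∀ w ∈ F, ¬ FactorOf w x}

/-- `X` is a shift space over the finite alphabet `A ⊆ ℕ`: `X` is a closed,
shift-invariant set of biinfinite sequences with letters in `A`. -/
def IsSubshift (A : Set ℕ) (X : Set Seq) : Prop :=
  A.Finite ∧ IsClosed X ∧ (∀ x, x ∈ X ↔ shift x ∈ X) ∧ ∀ x ∈ X, ∀ i, x i ∈ A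

/-- `X` is a shift space (over some finite alphabet). -/
def IsShiftSpace (X : Set Seq) : Prop := ∃ A : Set ℕ, IsSubshift A X

/-- A conjugacy between `X` and `Y`: a shift-commuting homeomorphism. -/
def Conjugate (X Y : Set Seq) : Prop :=
  ∃ φ : ↥X ≃ₜ ↥Y, ∀ x y : ↥X, shift x.1 = y.1 → shift (φ x).1 = (φ y).1

/-- The (globally defined) map `φ` restricts to a conjugacy from `X` onto `Y`:
there is a shift-commuting homeomorphism `X → Y` whose underlying map is `φ`. -/
def ConjugacyVia (φ : Seq → Seq) (X Y : Set Seq) : Prop :=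
  ∃ h : ↥X ≃ₜ ↥Y, (∀ x : ↥X, (h x).1 = φ x.1) ∧
    ∀ x y : ↥X, shift x.1 = y.1 → shift (h x).1 = (h y).1

/-- `y` is obtained from `x` by replacing every occurrence of the letter `a` by
`a ◇` (with `◇ = d`), possibly followed by one shift.  The reindexing function
`p` records the position in `y` of the `k`-th letter of `x`. -/
def ExpandsTo (a d : ℕ) (x y : Seq) : Prop :=
  ∃ p : ℤ → ℤ, (p 0 = 0 ∨ p 0 = -1) ∧
    (∀ k, p (k + 1) = p k + if x k = a then 2 else 1) ∧
    (∀ k, y (p k) = x k) ∧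
    ∀ k, x k = a → y (p k + 1) = d

/-- The symbol expansion `X^{a ↦ a◇}` with `◇ = d` (a symbol not in the alphabet
of `X`): all sequences obtained from points of `X` by replacing every
occurrence of `a` by `a◇`, together with all shifts of such sequences. -/
def symbolExpansion (X : Set Seq) (a d : ℕ) : Set Seq := {y | ∃ x ∈ X, ExpandsTo a d x y}

/-- Flow equivalence: the smallest equivalence relation on shift spaces (over
varying finite alphabets) containing conjugacy and relating every shift space
`X` to its symbol expansion `X^{a ↦ a◇}` for every letter `a` of the alphabet of
`X` and every new symbol `◇` (Parry–Sullivan). -/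
inductive FlowEquiv : Set Seq → Set Seq → Prop
  | of_conjugate {X Y : Set Seq} (hX : IsShiftSpace X) (hY : IsShiftSpace Y)
      (h : Conjugate X Y) : FlowEquiv X Y
  | expand {X : Set Seq} {A : Set ℕ} (a d : ℕ) (hX : IsSubshift A X)
      (ha : a ∈ A) (hd : d ∉ A) : FlowEquiv X (symbolExpansion X a d)
  | symm {X Y : Set Seq} : FlowEquiv X Y → FlowEquiv Y X
  | trans {X Y Z : Set Seq} : FlowEquiv X Y → FlowEquiv Y Z → FlowEquiv X Z

/-- The full shift on `k` symbols (realized on the alphabet `{0, …, k-1}`). -/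
def fullShift (k : ℕ) : Set Seq := {x | ∀ i, x i < k}

/-- `X` is a shift of finite type. -/
def IsSFT (X : Set Seq) : Prop := ∃ F : Set (List ℕ), F.Finite ∧ X = XF F

/-- `X` is an `n`-step shift of finite type:  `X = X_F` for a finite set `F` of
forbidden words of length `n+1`. -/
def IsNStepSFT (X : Set Seq) (n : ℕ) : Prop :=
  ∃ F : Set (List ℕ), F.Finite ∧ (∀ w ∈ F, w.length = n + 1) ∧ X = XF F

/-- Irreducibility of a shift space. -/
def IsIrreducibleShift (X : Set Seq) : Prop :=
  ∀ u ∈ lang X, ∀ w ∈ lang X, ∃ v ∈ lang X, u ++ v ++ w ∈ lang X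

open Filter Topology

/-! ### shift basics -/

def ushift (x : Seq) : Seq := fun i => x (i - 1)

lemma shift_ushift (x : Seq) : shift (ushift x) = x := by
  funext i; simp [shift, ushift]

lemma ushift_shift (x : Seq) : ushift (shift x) = x := by
  funext i; simp [shift, ushift]

lemma shift_injective : Function.Injective shift := by
  intro u v h; funext i
  have := congrFun h (i - 1)
  simpa [shift] using this

/-! ### staircase lemmas -/

section Stairs
variable {a d : ℕ} {x y : Seq} {p : ℤ → ℤ}

lemma p_bounds (hstep : ∀ k, p (k + 1) = p k + if x k = a then 2 else 1) :
    ∀ k l : ℤ, k ≤ l → p k + (l - k) ≤ p l ∧ p l ≤ p k + 2 * (l - k) := by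
  intro k l hkl
  have key : ∀ m : ℕ, ∀ k : ℤ, p k + m ≤ p (k + m) ∧ p (k + m) ≤ p k + 2 * m := by
    intro m
    induction m with
    | zero => intro k; simp
    | succ n ih =>
      intro k
      have h1 := ih k
      have h := hstep (k + n)
      have he : (k + (n + 1 : ℕ) : ℤ) = (k + n) + 1 := by push_cast; ring
      rw [he]
      by_cases hx : x (k + n) = a <;> simp [hx] at h <;> push_cast <;> omega
  have h2 := key (l - k).toNat k
  have he : (k + ((l - k).toNat : ℤ)) = l := by omega
  rw [he] at h2
  omega

lemma cover (hp0 : p 0 = 0 ∨ p 0 = -1)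
    (hstep : ∀ k, p (k + 1) = p k + if x k = a then 2 else 1) (j : ℤ) :
    ∃ k, p k = j ∨ (p k + 1 = j ∧ x k = a) := by
  have hb := p_bounds (a := a) (x := x) (p := p) hstep
  have Hbdd : ∃ b : ℤ, ∀ z : ℤ, p z ≤ j → z ≤ b := by
    refine ⟨max (j + 1) 0, fun z hz => ?_⟩
    rcases le_or_gt z 0 with h | h
    · omega
    · have := (hb 0 z (by omega)).1; omega
  have Hinh : ∃ z : ℤ, p z ≤ j := by
    refine ⟨-(1 + |j|), ?_⟩
    have h1 := (hb (-(1 + |j|)) 0 (by have := abs_nonneg j; omega)).1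
    have h2 : -j ≤ |j| := neg_le_abs j
    omega
  obtain ⟨k, hk, hmax⟩ := Int.exists_greatest_of_bdd (P := fun k => p k ≤ j) Hbdd Hinh
  have h1 : j < p (k + 1) := by
    by_contra h; push_neg at h
    have := hmax _ h; omega
  have h2 := hstep k
  by_cases hxk : x k = a
  · simp only [hxk, if_pos rfl] at h2
    rcases (by omega : j = p k ∨ j = p k + 1) with h | h
    · exact ⟨k, Or.inl h.symm⟩
    · exact ⟨k, Or.inr ⟨by omega, hxk⟩⟩
  · rw [if_neg hxk] at h2
    exact ⟨k, Or.inl (by omega)⟩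
end Stairs


section Struct
variable {a d : ℕ} {x y : Seq} {p : ℤ → ℤ}
variable (had : a ≠ d) (hxd : ∀ k, x k ≠ d)
set_option linter.unusedSectionVars false
variable (hp0 : p 0 = 0 ∨ p 0 = -1)
variable (hstep : ∀ k, p (k + 1) = p k + if x k = a then 2 else 1)
variable (hval : ∀ k, y (p k) = x k)
variable (hd2 : ∀ k, x k = a → y (p k + 1) = d)

include hxd hp0 hstep hval hd2

lemma mem_or (j : ℤ) : (∃ k, p k = j ∧ y j = x k) ∨ y j = d := by
  rcases cover hp0 hstep j with ⟨k, hk | ⟨hk, hxa⟩⟩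
  · exact Or.inl ⟨k, hk, by rw [← hk, hval]⟩
  · exact Or.inr (by rw [← hk]; exact hd2 k hxa)

include had

lemma Ya (j : ℤ) (h : y j = a) : y (j + 1) = d := by
  rcases mem_or hxd hp0 hstep hval hd2 j with ⟨k, hk, hyk⟩ | hyd
  · have hxa : x k = a := by rw [← hyk, h]
    have := hd2 k hxa
    rwa [hk] at this
  · rw [hyd] at h; exact absurd h.symm had

lemma Yd (j : ℤ) (h : y j = d) : y (j - 1) = a := by
  rcases cover hp0 hstep j with ⟨k, hk | ⟨hk, hxa⟩⟩
  · exact absurd (by rw [← hk] at h; rw [hval] at h; exact h) (hxd k)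
  · have : j - 1 = p k := by omega
    rw [this, hval, hxa]

lemma runbound {N : ℕ} (hFx : ∀ k : ℤ, ∃ t : ℕ, t < N ∧ x (k + (t : ℤ)) ≠ a) (i : ℤ) :
    ∃ t : ℕ, t ≤ 2 * N + 1 ∧ ¬(y (i - (t : ℤ)) = a ∨ y (i - (t : ℤ)) = d) := by
  by_contra hcon
  push_neg at hcon
  have hwin : ∀ j : ℤ, i - (2 * N + 1) ≤ j → j ≤ i → y j = a ∨ y j = d := by
    intro j h1 h2
    have h3 := hcon (i - j).toNat (by omega)
    have he : i - ((i - j).toNat : ℤ) = j := by omega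
    rw [he] at h3
    exact h3
  have hj0 : ∃ j0 : ℤ, y j0 = a ∧ i - (2 * N + 1) ≤ j0 ∧ j0 ≤ i - 2 * N := by
    rcases hwin (i - (2 * N + 1)) (le_refl _) (by omega) with h | h
    · exact ⟨i - (2 * N + 1), h, le_refl _, by omega⟩
    · rcases hwin (i - 2 * N) (by omega) (by omega) with h2 | h2
      · exact ⟨i - 2 * N, h2, by omega, le_refl _⟩
      · have h3 := Yd had hxd hp0 hstep hval hd2 _ h2
        rw [show i - 2 * (N : ℤ) - 1 = i - (2 * N + 1) by ring] at h3
        rw [h] at h3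
        exact absurd h3.symm had
  obtain ⟨j0, hj0a, hj0l, hj0u⟩ := hj0
  obtain ⟨k0, hk0, hk0v⟩ : ∃ k, p k = j0 ∧ y j0 = x k := by
    rcases mem_or hxd hp0 hstep hval hd2 j0 with h | h
    · exact h
    · rw [hj0a] at h; exact absurd h had
  have C : ∀ s : ℕ, s ≤ N → x (k0 + (s : ℤ)) = a ∧ p (k0 + (s : ℤ)) = j0 + 2 * s := by
    intro s
    induction s with
    | zero =>
      intro _
      constructor
      · simpa using (hk0v ▸ hj0a : x k0 = a)
      · simpa using hk0
    | succ s ih =>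
      intro hsN
      obtain ⟨hxs, hps⟩ := ih (by omega)
      have hstep' := hstep (k0 + (s : ℤ))
      rw [if_pos hxs, hps] at hstep'
      have hcast : k0 + ((s + 1 : ℕ) : ℤ) = k0 + (s : ℤ) + 1 := by push_cast; ring
      have hp' : p (k0 + ((s + 1 : ℕ) : ℤ)) = j0 + 2 * (s : ℤ) + 2 := by
        rw [hcast, hstep']
      have hyv : y (j0 + 2 * (s : ℤ) + 2) = x (k0 + ((s + 1 : ℕ) : ℤ)) := by
        rw [← hp', hval]
      have hy2s : y (j0 + 2 * (s : ℤ)) = a := by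
        have := hval (k0 + (s : ℤ))
        rw [hps] at this
        rw [this, hxs]
      have hy2s1 : y (j0 + 2 * (s : ℤ) + 1) = d :=
        Ya had hxd hp0 hstep hval hd2 _ hy2s
      have hy2s2 : y (j0 + 2 * (s : ℤ) + 2) = a := by
        rcases hwin (j0 + 2 * (s : ℤ) + 2) (by omega) (by omega) with h | h
        · exact h
        · exfalso
          have h4 := Yd had hxd hp0 hstep hval hd2 _ h
          rw [show j0 + 2 * (s : ℤ) + 2 - 1 = j0 + 2 * (s : ℤ) + 1 by ring, hy2s1] at h4
          exact had h4.symm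
      refine ⟨by rw [← hyv, hy2s2], by rw [hp']; push_cast; ring⟩
  obtain ⟨t, htN, hta⟩ := hFx k0
  exact hta (C t (by omega)).1

end Struct

/-! ### the inverse one-block-type map -/

def runCount (a : ℕ) {B : ℕ} (v : Fin B → ℕ) : ℕ :=
  (Finset.univ.filter fun t => ∀ s, s ≤ t → v s = a).card

lemma runCount_eq {a B : ℕ} (v : Fin B → ℕ) (L : Fin B)
    (hL : ∀ s, s < L → v s = a) (hLa : v L ≠ a) : runCount a v = L.val := by
  have hset : (Finset.univ.filter fun t => ∀ s, s ≤ t → v s = a) = Finset.Iio L := by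
    ext t
    simp only [Finset.mem_filter, Finset.mem_univ, true_and, Finset.mem_Iio]
    constructor
    · intro h
      by_contra hlt
      push_neg at hlt
      exact hLa (h L hlt)
    · intro h s hs
      exact hL s (lt_of_le_of_lt hs h)
  rw [runCount, hset, Fin.card_Iio]

def gmap (a d B : ℕ) (z : Seq) : Seq := fun i =>
  if z i = a ∧ runCount a (fun t : Fin (B + 1) => z (i - (t.val : ℤ))) % 2 = 0 then d
  else z i

lemma continuous_gmap (a d B : ℕ) : Continuous (gmap a d B) := by
  apply continuous_pi
  intro i
  have hfac : (fun z => gmap a d B z i) =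
      (fun v : Fin (B + 1) → ℕ => if v 0 = a ∧ runCount a v % 2 = 0 then d else v 0) ∘
        (fun z : Seq => fun t : Fin (B + 1) => z (i - (t.val : ℤ))) := by
    funext z
    simp [gmap]
  rw [hfac]
  exact continuous_of_discreteTopology.comp (continuous_pi fun t => continuous_apply _)

lemma continuous_fmap (a d : ℕ) : Continuous (fun y : Seq => fun i => if y i = d then a else y i) := by
  apply continuous_pi
  intro i
  have hfac : (fun y : Seq => if y i = d then a else y i) =
      (fun n : ℕ => if n = d then a else n) ∘ (fun y : Seq => y i) := rfl
  rw [hfac]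
  exact continuous_of_discreteTopology.comp (continuous_apply i)

section Inv
variable {a d : ℕ} {x y : Seq} {p : ℤ → ℤ}
variable (had : a ≠ d) (hxd : ∀ k, x k ≠ d)
variable (hp0 : p 0 = 0 ∨ p 0 = -1)
variable (hstep : ∀ k, p (k + 1) = p k + if x k = a then 2 else 1)
variable (hval : ∀ k, y (p k) = x k)
variable (hd2 : ∀ k, x k = a → y (p k + 1) = d)
set_option linter.unusedSectionVars false

include had hxd hp0 hstep hval hd2

lemma gmap_fmap {N : ℕ} (hFx : ∀ k : ℤ, ∃ t : ℕ, t < N ∧ x (k + (t : ℤ)) ≠ a) (i : ℤ) :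
    gmap a d (2 * N + 1) (fun j => if y j = d then a else y j) i = y i := by
  set z : Seq := fun j => if y j = d then a else y j with hzdef
  have hza : ∀ j, z j = a ↔ (y j = a ∨ y j = d) := by
    intro j
    by_cases h : y j = d
    · simp [hzdef, h]
    · simp [hzdef, h]
  have hzy : ∀ j, y j ≠ d → z j = y j := by
    intro j h; simp [hzdef, h]
  have hex : ∃ t : ℕ, ¬(y (i - (t : ℤ)) = a ∨ y (i - (t : ℤ)) = d) := by
    obtain ⟨t, _, h⟩ := runbound had hxd hp0 hstep hval hd2 hFx i
    exact ⟨t, h⟩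
  set T := Nat.find hex with hTdef
  have hTspec : ¬(y (i - (T : ℤ)) = a ∨ y (i - (T : ℤ)) = d) := Nat.find_spec hex
  have hTmin : ∀ s, s < T → (y (i - (s : ℤ)) = a ∨ y (i - (s : ℤ)) = d) := by
    intro s hs
    have h := Nat.find_min hex hs
    tauto
  have hTle : T ≤ 2 * N + 1 := by
    obtain ⟨t, ht, h⟩ := runbound had hxd hp0 hstep hval hd2 hFx i
    exact le_trans (Nat.find_min' hex h) ht
  have hrun : runCount a (fun t : Fin (2 * N + 1 + 1) => z (i - (t.val : ℤ))) = T := by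
    apply runCount_eq _ ⟨T, by omega⟩
    · intro s hs
      exact (hza _).mpr (hTmin s.val hs)
    · intro h
      exact hTspec ((hza _).mp h)
  by_cases hyd : y i = d
  · -- `T` is even and positive; result is `d`.
    have hT0 : 0 < T := by
      rcases Nat.eq_zero_or_pos T with h | h
      · exfalso
        apply hTspec
        rw [h]
        simpa using Or.inr hyd
      · exact h
    have Cd : ∀ s, s < T → y (i - (s : ℤ)) = if s % 2 = 0 then d else a := by
      intro s
      induction s with
      | zero => intro _; simpa using hyd
      | succ s ih =>
        intro hs
        have hprev := ih (by omega)
        by_cases hpar : s % 2 = 0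
        · rw [if_pos hpar] at hprev
          have h1 := Yd had hxd hp0 hstep hval hd2 _ hprev
          rw [show i - (s : ℤ) - 1 = i - ((s + 1 : ℕ) : ℤ) by push_cast; ring] at h1
          rw [h1, if_neg (by omega)]
        · rw [if_neg hpar] at hprev
          rcases hTmin (s + 1) hs with h | h
          · exfalso
            have h1 := Ya had hxd hp0 hstep hval hd2 _ h
            rw [show i - ((s + 1 : ℕ) : ℤ) + 1 = i - (s : ℤ) by push_cast; ring, hprev] at h1
            exact had h1
          · rw [h, if_pos (by omega)]
    have hTeven : T % 2 = 0 := by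
      by_contra hodd
      have h1 : (T - 1) % 2 = 0 := by omega
      have h2 := Cd (T - 1) (by omega)
      rw [if_pos h1] at h2
      have h3 := Yd had hxd hp0 hstep hval hd2 _ h2
      rw [show i - ((T - 1 : ℕ) : ℤ) - 1 = i - (T : ℤ) by omega] at h3
      exact hTspec (Or.inl h3)
    show (if z i = a ∧ _ % 2 = 0 then d else z i) = y i
    rw [hrun, if_pos ⟨(hza i).mpr (Or.inr hyd), hTeven⟩, hyd]
  · by_cases hya : y i = a
    · have hT0 : 0 < T := by
        rcases Nat.eq_zero_or_pos T with h | h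
        · exfalso
          apply hTspec
          rw [h]
          simpa using Or.inl hya
        · exact h
      have Ca : ∀ s, s < T → y (i - (s : ℤ)) = if s % 2 = 0 then a else d := by
        intro s
        induction s with
        | zero => intro _; simpa using hya
        | succ s ih =>
          intro hs
          have hprev := ih (by omega)
          by_cases hpar : s % 2 = 0
          · rw [if_pos hpar] at hprev
            rcases hTmin (s + 1) hs with h | h
            · exfalso
              have h1 := Ya had hxd hp0 hstep hval hd2 _ h
              rw [show i - ((s + 1 : ℕ) : ℤ) + 1 = i - (s : ℤ) by push_cast; ring, hprev] at h1
              exact had h1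
            · rw [h, if_neg (by omega)]
          · rw [if_neg hpar] at hprev
            have h1 := Yd had hxd hp0 hstep hval hd2 _ hprev
            rw [show i - (s : ℤ) - 1 = i - ((s + 1 : ℕ) : ℤ) by push_cast; ring] at h1
            rw [h1, if_pos (by omega)]
      have hTodd : ¬(T % 2 = 0) := by
        intro heven
        have h1 : (T - 1) % 2 ≠ 0 := by omega
        have h2 := Ca (T - 1) (by omega)
        rw [if_neg h1] at h2
        have h3 := Yd had hxd hp0 hstep hval hd2 _ h2
        rw [show i - ((T - 1 : ℕ) : ℤ) - 1 = i - (T : ℤ) by omega] at h3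
        exact hTspec (Or.inl h3)
      show (if z i = a ∧ _ % 2 = 0 then d else z i) = y i
      rw [hrun, if_neg (fun hc => hTodd hc.2), hzy i hyd]
    · show (if z i = a ∧ _ % 2 = 0 then d else z i) = y i
      rw [if_neg (fun hc => (by rcases (hza i).mp hc.1 with h | h <;> [exact hya h; exact hyd h] : False)), hzy i hyd]

end Inv

/-! ### canonical reindexing function -/

def stepv (a : ℕ) (x : Seq) (k : ℤ) : ℤ := if x k = a then 2 else 1

def pOf (a : ℕ) (x : Seq) (c : ℤ) (k : ℤ) : ℤ :=
  c + (∑ j ∈ Finset.range k.toNat, stepv a x j)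
    - (∑ j ∈ Finset.range (-k).toNat, stepv a x (-(j : ℤ) - 1))

lemma pOf_zero (a : ℕ) (x : Seq) (c : ℤ) : pOf a x c 0 = c := by
  simp [pOf]

lemma pOf_succ (a : ℕ) (x : Seq) (c : ℤ) (k : ℤ) :
    pOf a x c (k + 1) = pOf a x c k + stepv a x k := by
  rcases le_or_gt 0 k with h | h
  · have h1 : (k + 1).toNat = k.toNat + 1 := by omega
    have h2 : (-(k + 1)).toNat = 0 := by omega
    have h3 : (-k).toNat = 0 := by omega
    have h4 : ((k.toNat : ℤ)) = k := by omega
    rw [pOf, pOf, h1, h2, h3, Finset.sum_range_succ, h4]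
    simp
    ring
  · have h1 : (k + 1).toNat = 0 := by omega
    have h2 : k.toNat = 0 := by omega
    have h3 : (-k).toNat = (-(k + 1)).toNat + 1 := by omega
    have h4 : (-(((-(k + 1)).toNat : ℤ)) - 1) = k := by omega
    rw [pOf, pOf, h1, h2, h3, Finset.sum_range_succ, h4]
    simp
    ring

lemma eq_pOf {a : ℕ} {x : Seq} {c : ℤ} {p : ℤ → ℤ} (hp0 : p 0 = c)
    (hstep : ∀ k, p (k + 1) = p k + if x k = a then 2 else 1) :
    ∀ k, p k = pOf a x c k := by
  intro k
  induction k using Int.induction_on with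
  | zero => rw [hp0, pOf_zero]
  | succ n ih => rw [hstep, pOf_succ, ih]; rfl
  | pred n ih =>
    have h1 := hstep (-(n : ℤ) - 1)
    have h2 := pOf_succ a x c (-(n : ℤ) - 1)
    rw [show -(n : ℤ) - 1 + 1 = -(n : ℤ) by ring] at h1 h2
    have : stepv a x (-(n : ℤ) - 1) = if x (-(n : ℤ) - 1) = a then 2 else 1 := rfl
    omega

lemma pOf_congr {a : ℕ} {x x' : Seq} {c : ℤ} {k : ℤ}
    (h : ∀ j : ℤ, min k 0 ≤ j → j < max k 0 → x j = x' j) :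
    pOf a x c k = pOf a x' c k := by
  have e1 : (∑ j ∈ Finset.range k.toNat, stepv a x j)
      = (∑ j ∈ Finset.range k.toNat, stepv a x' j) := by
    apply Finset.sum_congr rfl
    intro j hj
    rw [Finset.mem_range] at hj
    have hx := h (j : ℤ) (by omega) (by omega)
    rw [stepv, stepv, hx]
  have e2 : (∑ j ∈ Finset.range (-k).toNat, stepv a x (-(j : ℤ) - 1))
      = (∑ j ∈ Finset.range (-k).toNat, stepv a x' (-(j : ℤ) - 1)) := by
    apply Finset.sum_congr rfl
    intro j hj
    rw [Finset.mem_range] at hj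
    have hx := h (-(j : ℤ) - 1) (by omega) (by omega)
    rw [stepv, stepv, hx]
  rw [pOf, pOf, e1, e2]

/-! ### shift invariance of the symbol expansion -/

lemma symbolExpansion_shift_mem {X : Set Seq} {a d : ℕ}
    (hXinv : ∀ u, u ∈ X ↔ shift u ∈ X) {y : Seq}
    (hy : y ∈ symbolExpansion X a d) : shift y ∈ symbolExpansion X a d := by
  obtain ⟨x, hx, p, hp0, hstep, hval, hd2⟩ := hy
  by_cases hc : p 0 = 0 ∧ x 0 = a
  · refine ⟨x, hx, fun k => p k - 1, Or.inr (by show p 0 - 1 = -1; omega), ?_, ?_, ?_⟩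
    · intro k
      show p (k + 1) - 1 = p k - 1 + if x k = a then 2 else 1
      have := hstep k; omega
    · intro k
      show y (p k - 1 + 1) = x k
      rw [show p k - 1 + 1 = p k by ring, hval]
    · intro k hk
      show y (p k - 1 + 1 + 1) = d
      rw [show p k - 1 + 1 + 1 = p k + 1 by ring]
      exact hd2 k hk
  · refine ⟨shift x, (hXinv x).mp hx, fun k => p (k + 1) - 1, ?_, ?_, ?_, ?_⟩
    · have h1 := hstep 0
      rw [show (0 : ℤ) + 1 = 1 by ring] at h1
      show p (0 + 1) - 1 = 0 ∨ p (0 + 1) - 1 = -1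
      rw [show (0 : ℤ) + 1 = 1 by ring]
      by_cases hx0 : x 0 = a
      · rw [if_pos hx0] at h1
        have : p 0 = -1 := by tauto
        omega
      · rw [if_neg hx0] at h1
        omega
    · intro k
      have := hstep (k + 1)
      show p (k + 1 + 1) - 1 = p (k + 1) - 1 + if shift x k = a then 2 else 1
      show p (k + 1 + 1) - 1 = p (k + 1) - 1 + if x (k + 1) = a then 2 else 1
      omega
    · intro k
      show y (p (k + 1) - 1 + 1) = x (k + 1)
      rw [show p (k + 1) - 1 + 1 = p (k + 1) by ring, hval]
    · intro k hk
      show y (p (k + 1) - 1 + 1 + 1) = d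
      rw [show p (k + 1) - 1 + 1 + 1 = p (k + 1) + 1 by ring]
      exact hd2 (k + 1) hk

lemma symbolExpansion_shift_mem' {X : Set Seq} {a d : ℕ}
    (hXinv : ∀ u, u ∈ X ↔ shift u ∈ X) {y : Seq}
    (hy : shift y ∈ symbolExpansion X a d) : y ∈ symbolExpansion X a d := by
  obtain ⟨x, hx, p, hp0, hstep, hval, hd2⟩ := hy
  have hval' : ∀ k, y (p k + 1) = x k := hval
  have hd2' : ∀ k, x k = a → y (p k + 2) = d := by
    intro k hk
    have := hd2 k hk
    show y (p k + 2) = d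
    rw [show p k + 2 = p k + 1 + 1 by ring]
    exact this
  rcases hp0 with hp0 | hp0
  · -- use `ushift x`
    refine ⟨ushift x, ?_, fun k => p (k - 1) + 1, ?_, ?_, ?_, ?_⟩
    · have := (hXinv (ushift x)).symm
      rw [shift_ushift] at this
      exact this.mp hx
    · have h1 := hstep (-1)
      rw [show (-1 : ℤ) + 1 = 0 by ring, hp0] at h1
      show p (0 - 1) + 1 = 0 ∨ p (0 - 1) + 1 = -1
      rw [show (0 : ℤ) - 1 = -1 by ring]
      by_cases hx0 : x (-1) = a
      · rw [if_pos hx0] at h1; omega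
      · rw [if_neg hx0] at h1; omega
    · intro k
      have := hstep (k - 1)
      rw [show k - 1 + 1 = k by ring] at this
      show p (k + 1 - 1) + 1 = p (k - 1) + 1 + if ushift x k = a then 2 else 1
      rw [show k + 1 - 1 = k by ring]
      show p k + 1 = p (k - 1) + 1 + if x (k - 1) = a then 2 else 1
      omega
    · intro k
      show y (p (k - 1) + 1) = x (k - 1)
      exact hval' (k - 1)
    · intro k hk
      show y (p (k - 1) + 1 + 1) = d
      rw [show p (k - 1) + 1 + 1 = p (k - 1) + 2 by ring]
      exact hd2' (k - 1) hk
  · -- use `x` itself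
    refine ⟨x, hx, fun k => p k + 1, Or.inl (by show p 0 + 1 = 0; omega), ?_, ?_, ?_⟩
    · intro k
      show p (k + 1) + 1 = p k + 1 + if x k = a then 2 else 1
      have := hstep k; omega
    · intro k; exact hval' k
    · intro k hk
      show y (p k + 1 + 1) = d
      rw [show p k + 1 + 1 = p k + 2 by ring]
      exact hd2' k hk

/-! ### the symbol expansion is closed -/

lemma symbolExpansion_isClosed {A : Set ℕ} {X : Set Seq} (hX : IsSubshift A X) (a d : ℕ) :
    IsClosed (symbolExpansion X a d) := by
  obtain ⟨hAfin, hXcl, hXinv, hXA⟩ := hX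
  have hXcomp : IsCompact X := by
    have hsub : X ⊆ Set.univ.pi (fun _ : ℤ => A) := fun u hu j _ => hXA u hu j
    exact (isCompact_univ_pi fun _ => hAfin.isCompact).of_isClosed_subset hXcl hsub
  apply IsSeqClosed.isClosed
  intro yseq y hmem hlim
  choose xs hxs ps hp0 hstep hval hd2 using hmem
  have hfreq : (∃ᶠ n in atTop, ps n 0 = 0) ∨ (∃ᶠ n in atTop, ps n 0 = -1) := by
    by_contra hcon
    push_neg at hcon
    obtain ⟨h1, h2⟩ := hcon
    obtain ⟨n, hn1, hn2⟩ := (h1.and h2).exists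
    rcases hp0 n with h | h
    · exact hn1 h
    · exact hn2 h
  obtain ⟨c, hc01, φ, hφ, hφc⟩ :
      ∃ c : ℤ, (c = 0 ∨ c = -1) ∧ ∃ φ : ℕ → ℕ, StrictMono φ ∧ ∀ n, ps (φ n) 0 = c := by
    rcases hfreq with h | h
    · exact ⟨0, Or.inl rfl, extraction_of_frequently_atTop h⟩
    · exact ⟨-1, Or.inr rfl, extraction_of_frequently_atTop h⟩
  obtain ⟨x, hxX, ψ, hψ, hxlim⟩ :=
    hXcomp.tendsto_subseq (x := fun n => xs (φ n)) (fun n => hxs _)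
  have hevx : ∀ j : ℤ, ∀ᶠ n in atTop, xs (φ (ψ n)) j = x j := by
    intro j
    have h1 := tendsto_pi_nhds.mp hxlim j
    rwa [nhds_discrete, tendsto_pure] at h1
  have hylim : Tendsto (fun n => yseq (φ (ψ n))) atTop (𝓝 y) :=
    hlim.comp ((hφ.comp hψ).tendsto_atTop)
  have hevy : ∀ j : ℤ, ∀ᶠ n in atTop, yseq (φ (ψ n)) j = y j := by
    intro j
    have h1 := tendsto_pi_nhds.mp hylim j
    rwa [nhds_discrete, tendsto_pure] at h1
  have hpeq : ∀ n, ∀ k, ps (φ (ψ n)) k = pOf a (xs (φ (ψ n))) c k := by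
    intro n
    exact eq_pOf (hφc (ψ n)) (hstep _)
  have hevp : ∀ k : ℤ, ∀ᶠ n in atTop, ps (φ (ψ n)) k = pOf a x c k := by
    intro k
    have h1 : ∀ᶠ n in atTop, ∀ j ∈ Finset.Icc (min k 0) (max k 0), xs (φ (ψ n)) j = x j := by
      rw [Filter.eventually_all_finset]
      intro j _
      exact hevx j
    filter_upwards [h1] with n hn
    rw [hpeq n k]
    exact pOf_congr (fun j hj1 hj2 => hn j (Finset.mem_Icc.mpr ⟨hj1, by omega⟩))
  refine ⟨x, hxX, pOf a x c, ?_, ?_, ?_, ?_⟩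
  · rw [pOf_zero]; exact hc01
  · intro k; rw [pOf_succ]; rfl
  · intro k
    obtain ⟨n, h1, h2, h3⟩ :=
      ((hevp k).and ((hevy (pOf a x c k)).and (hevx k))).exists
    rw [← h2, ← h1, hval, h3]
  · intro k hk
    obtain ⟨n, h1, h2, h3⟩ :=
      ((hevp k).and ((hevy (pOf a x c k + 1)).and (hevx k))).exists
    have hxa : xs (φ (ψ n)) k = a := by rw [h3, hk]
    have h4 := hd2 (φ (ψ n)) k hxa
    rw [h1] at h4
    rw [← h2, h4]


/-- Let `X` be a shift space over a finite alphabet `A` and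
`a ∈ A`.  If `a^N ∉ B(X)` for some `N`, then `X` is flow equivalent to
`X^{a ↦ aa}`; moreover the 1-block code fixing every letter of `A` and sending
`◇` to `a` restricts to a conjugacy from `X^{a ↦ a◇}` onto `X^{a ↦ aa}`. -/
theorem statement1 (A : Set ℕ) (X : Set Seq) (hX : IsSubshift A X)
    (a : ℕ) (ha : a ∈ A) (hN : ∃ N : ℕ, List.replicate N a ∉ lang X)
    (d : ℕ) (hd : d ∉ A) :
    FlowEquiv X ((fun y : Seq => fun i => if y i = d then a else y i) ''
        symbolExpansion X a d) ∧
      ConjugacyVia (fun y : Seq => fun i => if y i = d then a else y i)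
        (symbolExpansion X a d)
        ((fun y : Seq => fun i => if y i = d then a else y i) ''
          symbolExpansion X a d) := by
  obtain ⟨N, hN⟩ := hN
  obtain ⟨hAfin, hXcl, hXinv, hXA⟩ := hX
  have had : a ≠ d := fun h => hd (h ▸ ha)
  set f : Seq → Seq := fun y => fun i => if y i = d then a else y i with hfdef
  set Y : Set Seq := symbolExpansion X a d with hYdef
  set Z : Set Seq := f '' Y with hZdef
  -- no point of `X` contains `N` consecutive `a`s
  have hF : ∀ x ∈ X, ∀ k : ℤ, ∃ t : ℕ, t < N ∧ x (k + (t : ℤ)) ≠ a := by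
    intro x hx k
    by_contra h
    push_neg at h
    apply hN
    refine ⟨x, hx, k, ?_⟩
    rw [List.length_replicate]
    rw [List.eq_replicate_iff]
    constructor
    · simp [wordAt]
    · intro b hb
      rw [wordAt] at hb
      obtain ⟨t, ht⟩ := List.mem_ofFn.mp hb
      rw [← ht]
      exact h t.val t.isLt
  -- structural facts about points of the expansion
  have hYfacts : ∀ y ∈ Y, (∀ j, gmap a d (2 * N + 1) (f y) j = y j) ∧
      (∀ j : ℤ, y j ∈ A ∪ {d}) := by
    intro y hy
    obtain ⟨x, hx, p, hp0, hstep, hval, hd2⟩ := hy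
    have hxd : ∀ k, x k ≠ d := fun k h => hd (h ▸ hXA x hx k)
    have hFx : ∀ k : ℤ, ∃ t : ℕ, t < N ∧ x (k + (t : ℤ)) ≠ a := hF x hx
    constructor
    · intro j
      exact gmap_fmap had hxd hp0 hstep hval hd2 hFx j
    · intro j
      rcases mem_or hxd hp0 hstep hval hd2 j with ⟨k, _, hk⟩ | hdd
      · exact Or.inl (hk ▸ hXA x hx k)
      · exact Or.inr hdd
  have hgf : ∀ y ∈ Y, gmap a d (2 * N + 1) (f y) = y := by
    intro y hy
    funext j
    exact (hYfacts y hy).1 j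
  have hfc : Continuous f := continuous_fmap a d
  have hgc : Continuous (gmap a d (2 * N + 1)) := continuous_gmap a d (2 * N + 1)
  have hginv : ∀ z : Seq, z ∈ Z → gmap a d (2 * N + 1) z ∈ Y ∧
      f (gmap a d (2 * N + 1) z) = z := by
    intro z hz
    obtain ⟨y0, hy0, rfl⟩ := hz
    rw [hgf y0 hy0]
    exact ⟨hy0, rfl⟩
  -- the conjugacy
  let e : ↥Y ≃ₜ ↥Z :=
    { toFun := fun y => ⟨f y.1, Set.mem_image_of_mem f y.2⟩
      invFun := fun z => ⟨gmap a d (2 * N + 1) z.1, (hginv z.1 z.2).1⟩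
      left_inv := fun y => Subtype.ext (hgf y.1 y.2)
      right_inv := fun z => Subtype.ext (hginv z.1 z.2).2
      continuous_toFun := Continuous.subtype_mk (hfc.comp continuous_subtype_val) _
      continuous_invFun := Continuous.subtype_mk (hgc.comp continuous_subtype_val) _ }
  have hcomm : ∀ u v : ↥Y, shift u.1 = v.1 → shift (e u).1 = (e v).1 := by
    intro u v h
    show shift (f u.1) = f v.1
    rw [← h]
    funext i
    rfl
  have hconj : ConjugacyVia f Y Z := ⟨e, fun y => rfl, hcomm⟩
  -- `Y` is a shift space
  have hYcl : IsClosed Y := symbolExpansion_isClosed ⟨hAfin, hXcl, hXinv, hXA⟩ a d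
  have hYinv : ∀ u, u ∈ Y ↔ shift u ∈ Y := fun u =>
    ⟨fun h => symbolExpansion_shift_mem hXinv h, fun h => symbolExpansion_shift_mem' hXinv h⟩
  have hYA : ∀ u ∈ Y, ∀ j : ℤ, u j ∈ A ∪ {d} := fun u hu j => (hYfacts u hu).2 j
  have hYsub : IsSubshift (A ∪ {d}) Y :=
    ⟨hAfin.union (Set.finite_singleton d), hYcl, hYinv, hYA⟩
  -- `Z` is a shift space
  have hYcomp : IsCompact Y := by
    have hsub : Y ⊆ Set.univ.pi (fun _ : ℤ => A ∪ {d}) := fun u hu j _ => hYA u hu j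
    exact (isCompact_univ_pi fun _ =>
      ((hAfin.union (Set.finite_singleton d)).isCompact)).of_isClosed_subset hYcl hsub
  have hZcl : IsClosed Z := (hYcomp.image hfc).isClosed
  have hZinv : ∀ z, z ∈ Z ↔ shift z ∈ Z := by
    intro z
    constructor
    · rintro ⟨y0, hy0, rfl⟩
      refine ⟨shift y0, (hYinv y0).mp hy0, ?_⟩
      funext i
      rfl
    · rintro ⟨y1, hy1, heq⟩
      refine ⟨ushift y1, ?_, ?_⟩
      · rw [hYinv (ushift y1), shift_ushift]
        exact hy1
      · have h1 : f (ushift y1) = ushift (f y1) := by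
          funext i
          rfl
        rw [h1, heq, ushift_shift]
  have hZA : ∀ z ∈ Z, ∀ j : ℤ, z j ∈ A := by
    rintro z ⟨y0, hy0, rfl⟩ j
    show (if y0 j = d then a else y0 j) ∈ A
    by_cases h : y0 j = d
    · rw [if_pos h]; exact ha
    · rw [if_neg h]
      rcases hYA y0 hy0 j with h1 | h1
      · exact h1
      · exact absurd h1 h
  have hZsub : IsSubshift A Z := ⟨hAfin, hZcl, hZinv, hZA⟩
  -- assemble
  constructor
  · exact (FlowEquiv.expand a d ⟨hAfin, hXcl, hXinv, hXA⟩ ha hd).trans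
      (FlowEquiv.of_conjugate ⟨A ∪ {d}, hYsub⟩ ⟨A, hZsub⟩ ⟨e, hcomm⟩)
  · exact hconj


end SymbolicDynamics
end

section
/- Let X be a shift space over a finite alphabet 𝒜, let w ∈ B(X), and suppose X admits no non-trivial w-overlaps. Then X is flow equivalent to X^{w↦◇}, the shift space over 𝒜 ∪ {◇} obtained from X by replacing every occurrence of the word w by the single new symbol ◇ in every point of X (together with all shifts of the resulting sequences; this replacement is well defined because, in the absence of non-trivial w-overlaps, distinct occurrences of w in a point of X are disjoint). -/
namespace SymbolicDynamics

/-- `v` is a `w`-overlap: there are positions `0 = k₁ < k₂ < ⋯ < k_m = |v| - |w|`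
(0-based), consecutive ones less than `|w|` apart, such that `w` occurs in `v`
at each position `k_i`. -/
def IsOverlap (w v : List ℕ) : Prop :=
  w.length ≤ v.length ∧
  ∃ ks : List ℕ, ks ≠ [] ∧
    ks.Chain' (fun i j => i < j ∧ j < i + w.length) ∧
    ks.head? = some 0 ∧ ks.getLast? = some (v.length - w.length) ∧
    ∀ i ∈ ks, (v.drop i).take w.length = w

/-- `y` is obtained from `x` by replacing every occurrence of the word `w` by
the single symbol `d`, followed by an arbitrary shift.  The reindexing function
`q` records the positions in `x` of the letters surviving in `y`: it advances by
`|w|` across each occurrence of `w` (which is replaced by `d`) and by `1`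
elsewhere, and it reaches every occurrence of `w` in `x`. -/
def ContractsTo (w : List ℕ) (d : ℕ) (x y : Seq) : Prop :=
  ∃ q : ℤ → ℤ,
    (∀ j : ℤ, q (j + 1) = q j + if wordAt x (q j) w.length = w then (w.length : ℤ) else 1) ∧
    (∀ j : ℤ, y j = if wordAt x (q j) w.length = w then d else x (q j)) ∧
    ∀ i : ℤ, wordAt x i w.length = w → ∃ j : ℤ, q j = i

/-- `X^{w ↦ ◇}` (with `◇ = d`): the shift space obtained from `X` by replacing
every occurrence of the word `w` by the single new symbol `d` in every point of
`X`, together with all shifts of the resulting sequences. -/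
def wordReplace (X : Set Seq) (w : List ℕ) (d : ℕ) : Set Seq :=
  {y | ∃ x ∈ X, ContractsTo w d x y}






@[simp] lemma wordAt_length (x : Seq) (i : ℤ) (n : ℕ) : (wordAt x i n).length = n := by
  simp [wordAt]

lemma wordAt_eq_iff {x : Seq} {i : ℤ} {w : List ℕ} :
    wordAt x i w.length = w ↔ ∀ k : ℕ, (h : k < w.length) → x (i + k) = w.get ⟨k, h⟩ := by
  constructor
  · intro h k hk
    have h2 := List.get_of_eq h ⟨k, by simp [hk]⟩
    simpa [wordAt, List.get_ofFn] using h2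
  · intro h
    apply List.ext_get (by simp)
    intro k h1 h2
    simp only [wordAt, List.get_ofFn]
    simp only [wordAt_length] at h1
    exact h k h1

lemma wordAt_shift (x : Seq) (t i : ℤ) (n : ℕ) :
    wordAt (fun s => x (s + t)) i n = wordAt x (i + t) n := by
  simp only [wordAt]
  congr 1
  funext k
  ring_nf




/-- shift by t -/
def shiftBy (t : ℤ) (x : Seq) : Seq := fun i => x (i + t)

lemma shiftBy_mem {A : Set ℕ} {X : Set Seq} (hX : IsSubshift A X) (t : ℤ) {x : Seq}
    (hx : x ∈ X) : shiftBy t x ∈ X := by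
  induction t using Int.induction_on with
  | zero =>
      have e : shiftBy 0 x = x := by funext s; simp [shiftBy]
      rwa [e]
  | succ i ih =>
      have := (hX.2.2.1 (shiftBy i x)).1 ih
      have e : shift (shiftBy (i : ℤ) x) = shiftBy ((i : ℤ) + 1) x := by
        funext s; simp only [shift, shiftBy]; ring_nf
      rwa [e] at this
  | pred i ih =>
      have e : shift (shiftBy (-(i : ℤ) - 1) x) = shiftBy (-(i : ℤ)) x := by
        funext s; simp only [shift, shiftBy]; ring_nf
      exact (hX.2.2.1 _).2 (by rwa [e])

/-- continuity of evaluation with moving index -/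
lemma continuous_eval2 {α : Type*} [TopologicalSpace α] {β : Type*} [TopologicalSpace β]
    (F : α → ℤ → β) (G : α → ℤ) (hF : Continuous F) (hG : Continuous G) :
    Continuous fun a => F a (G a) := by
  rw [continuous_iff_continuousAt]
  intro a
  have hmem : {b : α | G b = G a} ∈ nhds a := by
    have : IsOpen {b : α | G b = G a} := by
      have : {b : α | G b = G a} = G ⁻¹' {G a} := rfl
      rw [this]; exact (isOpen_discrete _).preimage hG
    exact this.mem_nhds rfl
  have : ContinuousAt (fun b => F b (G a)) a := ((continuous_apply (G a)).comp hF).continuousAt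
  apply this.congr
  filter_upwards [hmem] with b hb
  rw [hb]

lemma isClopen_eq {α : Type*} [TopologicalSpace α] {β : Type*} [TopologicalSpace β]
    [DiscreteTopology β] {F G : α → β} (hF : Continuous F) (hG : Continuous G) :
    IsClosed {a | F a = G a} ∧ IsOpen {a | F a = G a} := by
  refine ⟨isClosed_eq hF hG, ?_⟩
  have : {a | F a = G a} = (fun a => (F a, G a)) ⁻¹' {p | p.1 = p.2} := rfl
  rw [this]
  exact (isOpen_discrete _).preimage (hF.prodMk hG)

/-- A map on a subtype of `Seq` which is determined by finitely many coordinates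
near each point is continuous. -/
lemma continuous_of_window {Z : Set Seq} {β : Type*} [TopologicalSpace β] [DiscreteTopology β]
    (F : ↥Z → β)
    (h : ∀ x : ↥Z, ∃ s : Finset ℤ, ∀ y : ↥Z, (∀ i ∈ s, y.1 i = x.1 i) → F y = F x) :
    Continuous F := by
  rw [continuous_discrete_rng]
  intro b
  rw [isOpen_iff_mem_nhds]
  intro x hx
  obtain ⟨s, hs⟩ := h x
  have hopen : IsOpen {y : ↥Z | ∀ i ∈ s, y.1 i = x.1 i} := by
    have : {y : ↥Z | ∀ i ∈ s, y.1 i = x.1 i} = ⋂ i ∈ s, {y : ↥Z | y.1 i = x.1 i} := by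
      ext y; simp
    rw [this]
    apply isOpen_biInter_finset
    intro i _
    exact ((isClopen_eq (F := fun y : ↥Z => y.1 i) (G := fun _ => x.1 i)
      ((continuous_apply i).comp continuous_subtype_val) continuous_const).2)
  have hsub : {y : ↥Z | ∀ i ∈ s, y.1 i = x.1 i} ⊆ (fun y => F y) ⁻¹' {b} := by
    intro y hy
    simp only [Set.mem_preimage, Set.mem_singleton_iff]
    rw [hs y hy]
    exact hx
  exact Filter.mem_of_superset (hopen.mem_nhds (by intro i _; rfl)) hsub





lemma wordAt_take (x : Seq) (i : ℤ) (m k : ℕ) :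
    (wordAt x i m).take k = wordAt x i (min k m) := by
  apply List.ext_get (by simp)
  intro j h1 h2
  simp [List.get_eq_getElem, List.getElem_take, wordAt, List.getElem_ofFn]

lemma wordAt_drop (x : Seq) (i : ℤ) (m k : ℕ) :
    (wordAt x i m).drop k = wordAt x (i + k) (m - k) := by
  apply List.ext_get (by simp)
  intro j h1 h2
  simp [List.get_eq_getElem, List.getElem_drop, wordAt, List.getElem_ofFn]
  congr 1
  push_cast
  ring

lemma occ_disjoint {X : Set Seq} {w : List ℕ}
    (hov : ∀ v ∈ lang X, IsOverlap w v → v = w)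
    {x : Seq} (hx : x ∈ X) {i i' : ℤ} (h : wordAt x i w.length = w)
    (h' : wordAt x i' w.length = w) (hle : i ≤ i') (hn : i' < i + w.length) : i' = i := by
  by_contra hne
  have hlt : i < i' := lt_of_le_of_ne hle (Ne.symm hne)
  set n := w.length with hn'
  obtain ⟨δ, hδ⟩ : ∃ δ : ℕ, (i' : ℤ) = i + δ := ⟨(i' - i).toNat, by omega⟩
  have hδpos : 0 < δ := by omega
  have hδn : δ < n := by omega
  set v := wordAt x i (n + δ) with hv
  have hvlang : v ∈ lang X := ⟨x, hx, i, by simp [hv]⟩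
  have hover : IsOverlap w v := by
    constructor
    · simp [hv]; omega
    refine ⟨[0, δ], by simp, ?_, by simp, by simp [hv]; omega, ?_⟩
    · simp [List.Chain', List.isChain_cons_cons]
      omega
    · intro j hj
      simp only [List.mem_cons, List.not_mem_nil, or_false, List.mem_singleton] at hj
      rcases hj with rfl | rfl
      · rw [List.drop_zero, hv, wordAt_take, min_eq_left (by omega)]
        exact h
      · rw [hv, wordAt_drop, wordAt_take]
        simp only [Nat.add_sub_cancel]
        rw [min_self, ← hδ]
        exact h'
  have := hov v hvlang hover
  have : v.length = w.length := by rw [this]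
  simp [hv] at this
  omega




/-- Generalized word-to-block replacement: `y` is obtained from `x` by replacing
every occurrence of `w` by the block `D 0, …, D (m-1)`. -/
def CRep (w : List ℕ) (D : ℕ → ℕ) (m : ℕ) (x y : Seq) : Prop :=
  ∃ q : ℤ → ℤ,
    (∀ j : ℤ, q (j + 1) = q j +
      if wordAt x (q j - ((m : ℤ) - 1)) w.length = w then (w.length : ℤ) - m + 1 else 1) ∧
    (∀ j : ℤ, ∀ k : ℕ, k < m → wordAt x (q j - k) w.length = w → y j = D k) ∧
    (∀ j : ℤ, (∀ k : ℕ, k < m → ¬ wordAt x (q j - k) w.length = w) → y j = x (q j)) ∧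
    (∀ i : ℤ, wordAt x i w.length = w → ∃ j, q j = i)

section Walk

lemma walk_bound {q s : ℤ → ℤ} (hq : ∀ j, q (j + 1) = q j + s j) (h1 : ∀ j, 1 ≤ s j)
    {c : ℤ} (hc : ∀ j, s j ≤ c) :
    ∀ j j' : ℤ, j ≤ j' → j' - j ≤ q j' - q j ∧ q j' - q j ≤ c * (j' - j) := by
  intro j
  refine Int.le_induction ?_ ?_
  · simp
  · intro j' hjj ih
    have := hq j'
    have h1' := h1 j'
    have hc' := hc j'
    constructor
    · omega
    · have : c * (j' + 1 - j) = c * (j' - j) + c := by ring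
      omega

lemma walk_strictMono {q s : ℤ → ℤ} (hq : ∀ j, q (j + 1) = q j + s j) (h1 : ∀ j, 1 ≤ s j) :
    StrictMono q := by
  apply strictMono_int_of_lt_succ
  intro j
  have := hq j
  have := h1 j
  omega

end Walk

section Context

variable {A : Set ℕ} {X : Set Seq} {w : List ℕ} {D : ℕ → ℕ}

/-- convenient form of the no-overlap hypothesis -/
lemma occ_near_eq (hov : ∀ v ∈ lang X, IsOverlap w v → v = w)
    {x : Seq} (hx : x ∈ X) {i i' : ℤ} (h : wordAt x i w.length = w)
    (h' : wordAt x i' w.length = w) (h1 : -(w.length : ℤ) < i' - i)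
    (h2 : i' - i < w.length) : i' = i := by
  rcases le_total i i' with hle | hle
  · exact occ_disjoint hov hx h h' hle (by omega)
  · exact (occ_disjoint hov hx h' h hle (by omega)).symm

/-- The step function of a `CRep` walk. -/
lemma crep_walk_block (hov : ∀ v ∈ lang X, IsOverlap w v → v = w) {m : ℕ} (hm1 : 1 ≤ m) (hmn : m ≤ w.length)
    {x : Seq} (hx : x ∈ X) {q : ℤ → ℤ}
    (hq : ∀ j : ℤ, q (j + 1) = q j +
      if wordAt x (q j - ((m : ℤ) - 1)) w.length = w then (w.length : ℤ) - m + 1 else 1)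
    (hsurj : ∀ i : ℤ, wordAt x i w.length = w → ∃ j, q j = i)
    {i₀ : ℤ} (hocc : wordAt x i₀ w.length = w) :
    ∃ j₀ : ℤ, q j₀ = i₀ ∧ (∀ k : ℕ, k < m → q (j₀ + k) = i₀ + k) ∧
      q (j₀ + m) = i₀ + w.length := by
  obtain ⟨j₀, hj₀⟩ := hsurj i₀ hocc
  have key : ∀ k : ℕ, k < m → q (j₀ + k) = i₀ + k := by
    intro k hk
    induction k with
    | zero => simpa using hj₀
    | succ k ih =>
        have ihk := ih (by omega)
        have step := hq (j₀ + k)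
        have hcond : ¬ wordAt x (q (j₀ + k) - ((m : ℤ) - 1)) w.length = w := by
          intro hc
          rw [ihk] at hc
          have := occ_near_eq hov hx hocc hc (by push_cast; omega) (by push_cast; omega)
          omega
        rw [if_neg hcond, ihk] at step
        have : (j₀ : ℤ) + (k + 1 : ℕ) = (j₀ + k) + 1 := by push_cast; ring
        rw [this, step]
        push_cast
        ring
  refine ⟨j₀, hj₀, key, ?_⟩
  have hlast := key (m - 1) (by omega)
  have step := hq (j₀ + (m - 1 : ℕ))
  have hcond : wordAt x (q (j₀ + (m - 1 : ℕ)) - ((m : ℤ) - 1)) w.length = w := by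
    rw [hlast]
    have : (i₀ : ℤ) + ((m : ℕ) - 1 : ℕ) - ((m : ℤ) - 1) = i₀ := by push_cast; omega
    rw [this]
    exact hocc
  rw [if_pos hcond, hlast] at step
  have : (j₀ : ℤ) + (m : ℕ) = (j₀ + ((m:ℕ) - 1 : ℕ)) + 1 := by push_cast; omega
  rw [this, step]
  push_cast
  omega

/-- gap lemma: the walk never visits `[i₀ + m, i₀ + n)` for an occurrence `i₀`. -/
lemma crep_gap (hov : ∀ v ∈ lang X, IsOverlap w v → v = w) {m : ℕ} (hm1 : 1 ≤ m) (hmn : m ≤ w.length)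
    {x : Seq} (hx : x ∈ X) {q : ℤ → ℤ}
    (hq : ∀ j : ℤ, q (j + 1) = q j +
      if wordAt x (q j - ((m : ℤ) - 1)) w.length = w then (w.length : ℤ) - m + 1 else 1)
    (hsurj : ∀ i : ℤ, wordAt x i w.length = w → ∃ j, q j = i)
    {i₀ : ℤ} (hocc : wordAt x i₀ w.length = w) (j : ℤ)
    (hge : i₀ + m ≤ q j) (hlt : q j < i₀ + w.length) : False := by
  obtain ⟨j₀, hj₀, hblock, hjump⟩ := crep_walk_block hov hm1 hmn hx hq hsurj hocc
  have hmono : StrictMono q := by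
    apply walk_strictMono hq
    intro j'
    split <;> omega
  have h1 : q (j₀ + ((m:ℤ) - 1)) = i₀ + m - 1 := by
    have := hblock (m - 1) (by omega)
    have e : (j₀ : ℤ) + ((m:ℤ) - 1) = j₀ + ((m - 1 : ℕ) : ℤ) := by push_cast; omega
    rw [e]
    push_cast at this ⊢
    omega
  have hgt : j₀ + ((m:ℤ) - 1) < j := by
    by_contra hcon
    push_neg at hcon
    have := hmono.le_iff_le.2 hcon
    omega
  have hlt2 : j < j₀ + m := by
    by_contra hcon
    push_neg at hcon
    have := hmono.le_iff_le.2 hcon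
    omega
  omega

/-- trichotomy / letter identification for a CRep witness -/
lemma crep_letter_iff (hX : IsSubshift A X) (hDA : ∀ k, D k ∉ A)
    (hDinj : Function.Injective D) {m : ℕ} {x y : Seq} (hx : x ∈ X) {q : ℤ → ℤ}
    (hlet : ∀ j : ℤ, ∀ k : ℕ, k < m → wordAt x (q j - k) w.length = w → y j = D k)
    (helse : ∀ j : ℤ, (∀ k : ℕ, k < m → ¬ wordAt x (q j - k) w.length = w) → y j = x (q j))
    (j : ℤ) (k : ℕ) (hk : k < m) :
    y j = D k ↔ wordAt x (q j - k) w.length = w := by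
  constructor
  · intro hy
    by_cases h : ∃ k' : ℕ, k' < m ∧ wordAt x (q j - k') w.length = w
    · obtain ⟨k', hk', hocc⟩ := h
      have := hlet j k' hk' hocc
      rw [hy] at this
      have := hDinj this
      subst this
      exact hocc
    · push_neg at h
      have := helse j h
      rw [hy] at this
      exact absurd (this ▸ hX.2.2.2 x hx (q j)) (hDA k)
  · exact hlet j k hk

end Context



/-- coverage of an expansion reindexing -/
lemma expand_cover {y : Seq} {a : ℕ} {p : ℤ → ℤ} (hp0 : p 0 = 0 ∨ p 0 = -1)
    (hprec : ∀ k, p (k + 1) = p k + if y k = a then 2 else 1) (t : ℤ) :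
    (∃ j, p j = t) ∨ (∃ j, p j + 1 = t ∧ y j = a) := by
  have hb := walk_bound (s := fun k => if y k = a then 2 else 1) hprec
    (fun j => by show (1:ℤ) ≤ if y j = a then 2 else 1; split <;> omega)
    (c := 2) (fun j => by show (if y j = a then 2 else 1 : ℤ) ≤ 2; split <;> omega)
  have hne : ∃ k, p k ≤ t := by
    refine ⟨-(t.natAbs : ℤ) - 1, ?_⟩
    have := hb (-(t.natAbs : ℤ) - 1) 0 (by omega)
    omega
  have hbdd : ∃ b : ℤ, ∀ k, p k ≤ t → k ≤ b := by
    refine ⟨max (t + 1) 0, ?_⟩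
    intro k hk
    rcases le_or_gt 0 k with h0 | h0
    · have := hb 0 k h0
      omega
    · omega
  obtain ⟨k, hk, hmax⟩ := Int.exists_greatest_of_bdd (by obtain ⟨b, hb'⟩ := hbdd; exact ⟨b, hb'⟩) hne
  have hk1 : t < p (k + 1) := by
    by_contra hcon
    push_neg at hcon
    have := hmax (k + 1) hcon
    omega
  have hstep := hprec k
  rcases eq_or_lt_of_le hk with heq | hlt
  · exact Or.inl ⟨k, heq⟩
  · right
    refine ⟨k, ?_, ?_⟩
    · by_cases hy : y k = a
      · rw [if_pos hy] at hstep; omega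
      · rw [if_neg hy] at hstep; omega
    · by_cases hy : y k = a
      · exact hy
      · rw [if_neg hy] at hstep; omega

section StepLemma

variable {A : Set ℕ} {X : Set Seq} {w : List ℕ} {D : ℕ → ℕ}

lemma crep_expand_subset (hX : IsSubshift A X)
    (hov : ∀ v ∈ lang X, IsOverlap w v → v = w)
    (hDA : ∀ k, D k ∉ A) (hDinj : Function.Injective D)
    {m : ℕ} (hm1 : 1 ≤ m) (hmn : m + 1 ≤ w.length) :
    symbolExpansion {y | ∃ x ∈ X, CRep w D m x y} (D (m - 1)) (D m) ⊆
      {z | ∃ x ∈ X, CRep w D (m + 1) x z} := by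
  classical
  intro z hz
  obtain ⟨y, ⟨x, hx, q, hqrec, hlet, helse, hsurj⟩, p, hp0, hprec, hpy, hpd⟩ := hz
  set n := w.length with hn
  have hn2 : 2 ≤ n := by omega
  have hcast : ((m - 1 : ℕ) : ℤ) = (m : ℤ) - 1 := by omega
  have hpmono : StrictMono p :=
    walk_strictMono hprec (fun j => by split <;> omega)
  have hpinj := hpmono.injective
  have hyiff : ∀ (j : ℤ) (k : ℕ), k < m →
      (y j = D k ↔ wordAt x (q j - k) w.length = w) :=
    crep_letter_iff hX hDA hDinj hx hlet helse
  have hamem : ∀ j : ℤ, y j = D (m - 1) ↔ wordAt x (q j - ((m : ℤ) - 1)) w.length = w := by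
    intro j
    rw [← hcast]
    exact hyiff j (m - 1) (by omega)
  have hgap : ∀ i₀ : ℤ, wordAt x i₀ w.length = w → ∀ j, i₀ + m ≤ q j → q j < i₀ + w.length → False :=
    fun i₀ hocc j h1 h2 => crep_gap hov hm1 (by omega) hx hqrec hsurj hocc j h1 h2
  have hcover := expand_cover hp0 hprec
  set q' : ℤ → ℤ := fun t =>
    if h : ∃ j, p j = t then q h.choose
    else if h2 : ∃ j, p j + 1 = t then q h2.choose + 1 else 0 with hq'
  have hq'p : ∀ j, q' (p j) = q j := by
    intro j
    have h : ∃ j', p j' = p j := ⟨j, rfl⟩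
    simp only [hq', dif_pos h]
    rw [hpinj h.choose_spec]
  have hq'p1 : ∀ j, y j = D (m - 1) → q' (p j + 1) = q j + 1 := by
    intro j hyj
    have hno : ¬ ∃ j', p j' = p j + 1 := by
      rintro ⟨j', hj'⟩
      have h1 : j < j' := hpmono.lt_iff_lt.1 (by omega)
      have h2 : p (j + 1) = p j + 2 := by rw [hprec j, if_pos hyj]
      have h3 : j' < j + 1 := hpmono.lt_iff_lt.1 (by omega)
      omega
    have h2 : ∃ j', p j' + 1 = p j + 1 := ⟨j, rfl⟩
    simp only [hq', dif_neg hno, dif_pos h2]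
    have := h2.choose_spec
    have : h2.choose = j := hpinj (by omega)
    rw [this]
  have hq'pnext : ∀ j, y j ≠ D (m - 1) → q' (p j + 1) = q (j + 1) := by
    intro j hyj
    have : p (j + 1) = p j + 1 := by rw [hprec j, if_neg hyj]
    rw [← this, hq'p]
  -- cast facts for the (m+1)-walk
  have hcast2 : ((m + 1 : ℕ) : ℤ) - 1 = (m : ℤ) := by push_cast; ring
  refine ⟨x, hx, q', ?_, ?_, ?_, ?_⟩
  · -- recurrence
    intro t
    rcases hcover t with ⟨j, rfl⟩ | ⟨j, hj, hyj⟩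
    · by_cases hyj : y j = D (m - 1)
      · have hocc := (hamem j).1 hyj
        have e1 := hq'p j
        have e2 := hq'p1 j hyj
        have hcond : ¬ wordAt x (q' (p j) - (((m + 1 : ℕ) : ℤ) - 1)) w.length = w := by
          rw [hcast2, e1]
          intro hc
          have := occ_near_eq hov hx hocc hc (by omega) (by omega)
          omega
        rw [if_neg hcond, e1, e2]
      · have e1 := hq'p j
        have e2 := hq'pnext j hyj
        have hnocc : ¬ wordAt x (q j - ((m : ℤ) - 1)) w.length = w :=
          fun h => hyj ((hamem j).2 h)
        have hq1 : q (j + 1) = q j + 1 := by rw [hqrec j, if_neg hnocc]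
        have hcond : ¬ wordAt x (q' (p j) - (((m + 1 : ℕ) : ℤ) - 1)) w.length = w := by
          rw [hcast2, e1]
          intro hc
          exact hgap _ hc j (by omega) (by omega)
        rw [if_neg hcond, e1, e2, hq1]
    · subst hj
      have hocc := (hamem j).1 hyj
      have e1 := hq'p1 j hyj
      have e2 : q' (p j + 1 + 1) = q (j + 1) := by
        have hp2 : p (j + 1) = p j + 2 := by rw [hprec j, if_pos hyj]
        have : p j + 1 + 1 = p (j + 1) := by omega
        rw [this, hq'p]
      have hq1 : q (j + 1) = q j + ((n : ℤ) - m + 1) := by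
        rw [hqrec j, if_pos hocc]
      have hcond : wordAt x (q' (p j + 1) - (((m + 1 : ℕ) : ℤ) - 1)) w.length = w := by
        rw [hcast2, e1]
        have : q j + 1 - (m : ℤ) = q j - ((m : ℤ) - 1) := by ring
        rw [this]
        exact hocc
      rw [if_pos hcond, e1, e2, hq1]
      push_cast
      ring
  · -- letter clause
    intro t k hk hocck
    rcases hcover t with ⟨j, rfl⟩ | ⟨j, hj, hyj⟩
    · rw [hq'p] at hocck
      have hz : z (p j) = y j := hpy j
      rcases Nat.lt_or_ge k m with hkm | hkm
      · rw [hz]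
        exact hlet j k hkm hocck
      · have hkm' : k = m := by omega
        subst hkm'
        exact absurd hocck (fun hc => hgap _ hc j (by omega) (by omega))
    · subst hj
      have hocc := (hamem j).1 hyj
      rw [hq'p1 j hyj] at hocck
      rcases Nat.lt_or_ge k m with hkm | hkm
      · exfalso
        have := occ_near_eq hov hx hocc hocck (by omega) (by omega)
        omega
      · have hkm' : k = m := by omega
        subst hkm'
        exact hpd j hyj
  · -- else clause
    intro t hno
    rcases hcover t with ⟨j, rfl⟩ | ⟨j, hj, hyj⟩
    · rw [hq'p]
      rw [hpy j]
      apply helse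
      intro k hk
      have := hno k (by omega)
      rwa [hq'p] at this
    · subst hj
      exfalso
      have hocc := (hamem j).1 hyj
      apply hno m (by omega)
      rw [hq'p1 j hyj]
      have : q j + 1 - (m : ℤ) = q j - ((m : ℤ) - 1) := by push_cast; ring
      rw [this]
      exact hocc
  · -- surjectivity
    intro i hi
    obtain ⟨j, hj⟩ := hsurj i hi
    exact ⟨p j, by rw [hq'p]; exact hj⟩

lemma crep_contract_subset (hX : IsSubshift A X)
    (hov : ∀ v ∈ lang X, IsOverlap w v → v = w)
    (hDA : ∀ k, D k ∉ A) (hDinj : Function.Injective D)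
    {m : ℕ} (hm1 : 1 ≤ m) (hmn : m + 1 ≤ w.length) :
    {z | ∃ x ∈ X, CRep w D (m + 1) x z} ⊆
      symbolExpansion {y | ∃ x ∈ X, CRep w D m x y} (D (m - 1)) (D m) := by
  classical
  intro z hz
  obtain ⟨x, hx, q', hrec, hlet, helse, hsurj⟩ := hz
  set n := w.length with hn
  have hn2 : 2 ≤ n := by omega
  have hcast : ((m - 1 : ℕ) : ℤ) = (m : ℤ) - 1 := by omega
  set Slot : ℤ → Prop := fun t => wordAt x (q' t - (m : ℤ)) n = w with hSlot
  have hrec' : ∀ t, q' (t + 1) = q' t + if Slot t then (n : ℤ) - m else 1 := by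
    intro t
    have e : q' t - (((m + 1 : ℕ) : ℤ) - 1) = q' t - (m : ℤ) := by push_cast; ring
    have h := hrec t
    rw [e] at h
    rw [h]
    by_cases hs : Slot t
    · rw [if_pos hs, if_pos hs]
      push_cast
      ring_nf
    · rw [if_neg hs, if_neg hs]
  have hadj : ∀ t, Slot t → Slot (t + 1) → False := by
    intro t h1 h2
    have e := hrec' t
    rw [if_pos h1] at e
    have h2' : wordAt x ((q' t - (m : ℤ)) + ((n : ℤ) - m)) n = w := by
      have e2 : q' (t + 1) - (m : ℤ) = (q' t - (m : ℤ)) + ((n : ℤ) - m) := by omega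
      rw [← e2]
      exact h2
    have := occ_near_eq hov hx h1 h2' (by omega) (by omega)
    omega
  set t₀ : ℤ := if Slot 0 then (-1 : ℤ) else 0 with ht₀def
  have ht₀kept : ¬ Slot t₀ := by
    by_cases h0 : Slot 0
    · rw [ht₀def, if_pos h0]
      intro h
      exact hadj (-1) h (by simpa using h0)
    · rwa [ht₀def, if_neg h0]
  have ht₀val : t₀ = 0 ∨ t₀ = -1 := by
    by_cases h0 : Slot 0
    · right; rw [ht₀def, if_pos h0]
    · left; rw [ht₀def, if_neg h0]
  set F : ℤ → ℤ := fun t => if Slot (t + 1) then t + 2 else t + 1 with hF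
  set B : ℤ → ℤ := fun t => if Slot (t - 1) then t - 2 else t - 1 with hB
  have keptF : ∀ t, ¬ Slot t → ¬ Slot (F t) := by
    intro t ht
    by_cases h1 : Slot (t + 1)
    · rw [hF]; simp only [if_pos h1]
      intro h
      have e : t + 1 + 1 = t + 2 := by ring
      exact hadj (t + 1) h1 (e.symm ▸ h)
    · rw [hF]; simp only [if_neg h1]
      exact h1
  have keptB : ∀ t, ¬ Slot t → ¬ Slot (B t) := by
    intro t ht
    by_cases h1 : Slot (t - 1)
    · rw [hB]; simp only [if_pos h1]
      intro h
      have e : t - 2 + 1 = t - 1 := by ring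
      exact hadj (t - 2) h (e.symm ▸ h1)
    · rw [hB]; simp only [if_neg h1]
      exact h1
  have hFB : ∀ t, ¬ Slot t → F (B t) = t := by
    intro t ht
    by_cases h1 : Slot (t - 1)
    · rw [hB]; simp only [if_pos h1]
      rw [hF]
      have : t - 2 + 1 = t - 1 := by ring
      simp only [this, if_pos h1]
      ring
    · rw [hB]; simp only [if_neg h1]
      rw [hF]
      have : t - 1 + 1 = t := by ring
      simp only [this, if_neg ht]
  have hBF : ∀ t, ¬ Slot t → B (F t) = t := by
    intro t ht
    by_cases h1 : Slot (t + 1)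
    · rw [hF]; simp only [if_pos h1]
      rw [hB]
      have : t + 2 - 1 = t + 1 := by ring
      simp only [this, if_pos h1]
      ring
    · rw [hF]; simp only [if_neg h1]
      rw [hB]
      have : t + 1 - 1 = t := by ring
      simp only [this, if_neg ht]
  set p : ℤ → ℤ := fun k => if 0 ≤ k then F^[k.toNat] t₀ else B^[(-k).toNat] t₀ with hp
  have keptFiter : ∀ N : ℕ, ¬ Slot (F^[N] t₀) := by
    intro N
    induction N with
    | zero => simpa using ht₀kept
    | succ N ih =>
        rw [Function.iterate_succ_apply']
        exact keptF _ ih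
  have keptBiter : ∀ N : ℕ, ¬ Slot (B^[N] t₀) := by
    intro N
    induction N with
    | zero => simpa using ht₀kept
    | succ N ih =>
        rw [Function.iterate_succ_apply']
        exact keptB _ ih
  have hpkept : ∀ k, ¬ Slot (p k) := by
    intro k
    rw [hp]
    by_cases hk : 0 ≤ k
    · simp only [if_pos hk]; exact keptFiter _
    · simp only [if_neg hk]; exact keptBiter _
  have hpF : ∀ k, p (k + 1) = F (p k) := by
    intro k
    rcases le_or_gt 0 k with hk | hk
    · have hk1 : 0 ≤ k + 1 := by omega
      rw [hp]
      simp only [if_pos hk, if_pos hk1]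
      have : (k + 1).toNat = k.toNat + 1 := by omega
      rw [this, Function.iterate_succ_apply']
    · rcases eq_or_lt_of_le (by omega : k + 1 ≤ 0) with heq | hlt
      · have hk0 : k = -1 := by omega
        subst hk0
        rw [hp]
        have e1 : (-1 : ℤ) + 1 = 0 := by ring
        rw [e1]
        simp only [le_refl, if_pos, Int.toNat_zero, Function.iterate_zero, id_eq]
        have hneg : ¬ (0 : ℤ) ≤ -1 := by omega
        rw [if_neg hneg]
        have : ((-(-1) : ℤ)).toNat = 1 := by omega
        rw [this, Function.iterate_one]
        exact (hFB t₀ ht₀kept).symm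
      · have hk1 : ¬ (0 : ℤ) ≤ k + 1 := by omega
        have hk2 : ¬ (0 : ℤ) ≤ k := by omega
        rw [hp]
        simp only [if_neg hk1, if_neg hk2]
        have : (-k).toNat = (-(k + 1)).toNat + 1 := by omega
        rw [this, Function.iterate_succ_apply']
        exact (hFB _ (keptBiter _)).symm
  have hpstep : ∀ k, p (k + 1) = p k + if Slot (p k + 1) then 2 else 1 := by
    intro k
    rw [hpF k, hF]
    by_cases hs : Slot (p k + 1)
    · simp only [if_pos hs]
    · simp only [if_neg hs]
  have hpmono : StrictMono p :=
    walk_strictMono hpstep (fun j => by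
      show (1:ℤ) ≤ if Slot (p j + 1) then 2 else 1
      split <;> omega)
  have hp0 : p 0 = t₀ := by
    rw [hp]
    simp
  have hpsurj : ∀ t, ¬ Slot t → ∃ k, p k = t := by
    intro t ht
    have hb := walk_bound (s := fun k => if Slot (p k + 1) then 2 else 1) hpstep
      (fun j => by show (1:ℤ) ≤ if Slot (p j + 1) then 2 else 1; split <;> omega)
      (c := 2) (fun j => by show (if Slot (p j + 1) then 2 else 1 : ℤ) ≤ 2; split <;> omega)
    have ht₀b : -1 ≤ t₀ ∧ t₀ ≤ 0 := by rcases ht₀val with h | h <;> omega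
    have hne : ∃ k, p k ≤ t := by
      refine ⟨-(t.natAbs : ℤ) - 2, ?_⟩
      have := hb (-(t.natAbs : ℤ) - 2) 0 (by omega)
      rw [hp0] at this
      omega
    have hbdd : ∃ b : ℤ, ∀ k, p k ≤ t → k ≤ b := by
      refine ⟨max (t + 2) 0, ?_⟩
      intro k hk
      rcases le_or_gt 0 k with h0 | h0
      · have := hb 0 k h0
        rw [hp0] at this
        omega
      · omega
    obtain ⟨k, hk, hmax⟩ := Int.exists_greatest_of_bdd hbdd hne
    have hk1 : t < p (k + 1) := by
      by_contra hcon
      push_neg at hcon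
      have := hmax (k + 1) hcon
      omega
    have hstep := hpstep k
    rcases eq_or_lt_of_le hk with heq | hlt
    · exact ⟨k, heq⟩
    · exfalso
      by_cases hs : Slot (p k + 1)
      · rw [if_pos hs] at hstep
        have : t = p k + 1 := by omega
        rw [← this] at hs
        exact ht hs
      · rw [if_neg hs] at hstep
        omega
  -- the contracted point and its walk
  set y : Seq := fun k => z (p k) with hy
  set q : ℤ → ℤ := fun k => q' (p k) with hqdef
  have hq'step1 : ∀ k : ℤ, q' (p k + 1) = q' (p k) + 1 := by
    intro k
    rw [hrec' (p k), if_neg (hpkept k)]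
  have hSlotiff : ∀ k : ℤ, Slot (p k + 1) ↔ wordAt x (q' (p k) - ((m : ℤ) - 1)) n = w := by
    intro k
    show wordAt x (q' (p k + 1) - (m : ℤ)) n = w ↔ _
    have e : q' (p k + 1) - (m : ℤ) = q' (p k) - ((m : ℤ) - 1) := by
      have := hq'step1 k
      omega
    rw [e]
  have hziff : ∀ (t : ℤ) (k : ℕ), k < m + 1 →
      (z t = D k ↔ wordAt x (q' t - k) w.length = w) :=
    crep_letter_iff hX hDA hDinj hx hlet helse
  have hyiff : ∀ k : ℤ, y k = D (m - 1) ↔ Slot (p k + 1) := by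
    intro k
    rw [hy]
    have := hziff (p k) (m - 1) (by omega)
    rw [hcast] at this
    rw [this, hSlotiff k]
  refine ⟨y, ⟨x, hx, q, ?_, ?_, ?_, ?_⟩, p, ?_, ?_, ?_, ?_⟩
  · -- CRep m recurrence
    intro k
    by_cases hs : Slot (p k + 1)
    · have h2 : p (k + 1) = p k + 2 := by rw [hpstep k, if_pos hs]
      have e1 := hq'step1 k
      have e2 : q' (p k + 2) = q' (p k + 1) + ((n : ℤ) - m) := by
        have h3 := hrec' (p k + 1)
        rw [if_pos hs] at h3
        have e : p k + 1 + 1 = p k + 2 := by ring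
        rw [e] at h3
        exact h3
      have hcond : wordAt x (q (k : ℤ) - ((m : ℤ) - 1)) n = w := (hSlotiff k).1 hs
      rw [if_pos hcond]
      show q' (p (k + 1)) = q' (p k) + ((n : ℤ) - m + 1)
      rw [h2]
      omega
    · have h2 : p (k + 1) = p k + 1 := by rw [hpstep k, if_neg hs]
      have hcond : ¬ wordAt x (q (k : ℤ) - ((m : ℤ) - 1)) n = w :=
        fun h => hs ((hSlotiff k).2 h)
      rw [if_neg hcond]
      show q' (p (k + 1)) = q' (p k) + 1
      rw [h2]
      exact hq'step1 k
  · -- letter clause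
    intro k k' hk' hocc
    exact hlet (p k) k' (by omega) hocc
  · -- else clause
    intro k hno
    apply helse (p k)
    intro k' hk'
    rcases Nat.lt_or_ge k' m with h | h
    · exact hno k' h
    · have : k' = m := by omega
      subst this
      exact hpkept k
  · -- surjectivity
    intro i hi
    obtain ⟨t, htq⟩ := hsurj i hi
    have hkept : ¬ Slot t := by
      intro hs
      have hs : wordAt x (q' t - (m : ℤ)) n = w := hs
      rw [htq] at hs
      have := occ_near_eq hov hx hi hs (by omega) (by omega)
      omega
    obtain ⟨k, hk⟩ := hpsurj t hkept
    exact ⟨k, by rw [hqdef]; simp only; rw [hk]; exact htq⟩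
  · -- p 0
    rw [hp0]
    rcases ht₀val with h | h
    · left; exact h
    · right; exact h
  · -- ExpandsTo recurrence
    intro k
    rw [hpstep k]
    by_cases hs : Slot (p k + 1)
    · rw [if_pos hs, if_pos ((hyiff k).2 hs)]
    · rw [if_neg hs, if_neg (fun h => hs ((hyiff k).1 h))]
  · -- values
    intro k
    rfl
  · -- inserted symbol
    intro k hk
    have hs : wordAt x (q' (p k + 1) - (m : ℤ)) n = w := (hyiff k).1 hk
    exact hlet (p k + 1) m (by omega) hs


end StepLemma


section Crep1

variable {w : List ℕ} {D : ℕ → ℕ} {d : ℕ}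

lemma contractsTo_iff_crep1 (hD0 : D 0 = d) {x y : Seq} :
    ContractsTo w d x y ↔ CRep w D 1 x y := by
  have e : ∀ q : ℤ → ℤ, ∀ j : ℤ, q j - (((1:ℕ) : ℤ) - 1) = q j := by intro q j; push_cast; ring
  constructor
  · rintro ⟨q, hrec, hval, hsurj⟩
    refine ⟨q, ?_, ?_, ?_, hsurj⟩
    · intro j
      rw [hrec j, e q j]
      split <;> push_cast <;> ring
    · intro j k hk hocc
      interval_cases k
      rw [hval j, if_pos (by simpa using hocc), hD0]
    · intro j hno
      have h0 := hno 0 (by omega)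
      rw [hval j, if_neg (by simpa using h0)]
  · rintro ⟨q, hrec, hlet, helse, hsurj⟩
    refine ⟨q, ?_, ?_, hsurj⟩
    · intro j
      have := hrec j
      rw [e q j] at this
      rw [this]
      split <;> push_cast <;> ring
    · intro j
      by_cases hocc : wordAt x (q j) w.length = w
      · rw [if_pos hocc, ← hD0]
        exact hlet j 0 (by omega) (by simpa using hocc)
      · rw [if_neg hocc]
        exact helse j (by intro k hk; interval_cases k; simpa using hocc)
  
end Crep1

section Relabel

open Classical in
/-- relabel the occurrences of `w` in `x` by the block `D 0 ⋯ D (n-1)` -/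
noncomputable def relabel (w : List ℕ) (D : ℕ → ℕ) (x : Seq) : Seq := fun t =>
  if h : ∃ k : ℕ, k < w.length ∧ wordAt x (t - k) w.length = w then D h.choose else x t

open Classical in
/-- inverse relabelling -/
noncomputable def unrelabel (w : List ℕ) (D : ℕ → ℕ) (y : Seq) : Seq := fun t =>
  if h : ∃ k : ℕ, k < w.length ∧ y t = D k then w.getD h.choose 0 else y t

variable {A : Set ℕ} {X : Set Seq} {w : List ℕ} {D : ℕ → ℕ}

lemma occ_offset_unique (hov : ∀ v ∈ lang X, IsOverlap w v → v = w)
    {x : Seq} (hx : x ∈ X) {t : ℤ} {k k' : ℕ} (hk : k < w.length) (hk' : k' < w.length)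
    (h : wordAt x (t - k) w.length = w) (h' : wordAt x (t - k') w.length = w) : k = k' := by
  have := occ_near_eq hov hx h h' (by omega) (by omega)
  omega

lemma relabel_occ (hov : ∀ v ∈ lang X, IsOverlap w v → v = w)
    {x : Seq} (hx : x ∈ X) {t : ℤ} {k : ℕ} (hk : k < w.length)
    (hocc : wordAt x (t - k) w.length = w) : relabel w D x t = D k := by
  classical
  have h : ∃ k : ℕ, k < w.length ∧ wordAt x (t - k) w.length = w := ⟨k, hk, hocc⟩
  rw [relabel, dif_pos h]
  congr 1
  exact occ_offset_unique hov hx h.choose_spec.1 hk h.choose_spec.2 hocc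

lemma relabel_no {x : Seq} {t : ℤ}
    (hno : ∀ k : ℕ, k < w.length → ¬ wordAt x (t - k) w.length = w) :
    relabel w D x t = x t := by
  classical
  rw [relabel, dif_neg]
  rintro ⟨k, hk, hocc⟩
  exact hno k hk hocc

lemma unrelabel_congr (hDinj : Function.Injective D) {y y' : Seq} {t : ℤ}
    (h : y t = y' t) : unrelabel w D y t = unrelabel w D y' t := by
  classical
  by_cases h1 : ∃ k : ℕ, k < w.length ∧ y t = D k
  · have h2 : ∃ k : ℕ, k < w.length ∧ y' t = D k := by rwa [← h]
    rw [unrelabel, unrelabel, dif_pos h1, dif_pos h2]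
    congr 1
    apply hDinj
    rw [← h1.choose_spec.2, ← h2.choose_spec.2, h]
  · have h2 : ¬ ∃ k : ℕ, k < w.length ∧ y' t = D k := by rwa [← h]
    rw [unrelabel, unrelabel, dif_neg h1, dif_neg h2, h]

lemma unrelabel_relabel (hX : IsSubshift A X) (hov : ∀ v ∈ lang X, IsOverlap w v → v = w)
    (hDA : ∀ k, D k ∉ A) (hDinj : Function.Injective D)
    {x : Seq} (hx : x ∈ X) : unrelabel w D (relabel w D x) = x := by
  classical
  funext t
  by_cases h : ∃ k : ℕ, k < w.length ∧ wordAt x (t - k) w.length = w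
  · obtain ⟨k, hk, hocc⟩ := h
    have hr : relabel w D x t = D k := relabel_occ hov hx hk hocc
    have h2 : ∃ k' : ℕ, k' < w.length ∧ relabel w D x t = D k' := ⟨k, hk, hr⟩
    rw [unrelabel, dif_pos h2]
    have hck : h2.choose = k := hDinj (by rw [← h2.choose_spec.2, hr])
    rw [hck]
    have := wordAt_eq_iff.1 hocc k hk
    have e : t - (k : ℤ) + (k : ℤ) = t := by ring
    rw [e] at this
    rw [this, List.getD_eq_getElem w 0 hk]
    simp [List.get_eq_getElem]
  · push_neg at h
    have hr : relabel w D x t = x t := relabel_no h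
    have h2 : ¬ ∃ k' : ℕ, k' < w.length ∧ relabel w D x t = D k' := by
      rintro ⟨k', hk', he⟩
      rw [hr] at he
      exact hDA k' (he ▸ hX.2.2.2 x hx t)
    rw [unrelabel, dif_neg h2, hr]

lemma walk_affine {q : ℤ → ℤ} (hq : ∀ j : ℤ, q (j + 1) = q j + 1) :
    ∀ j : ℤ, q j = q 0 + j := by
  intro j
  have hb := walk_bound (s := fun _ => 1) hq (fun _ => le_refl 1) (c := 1) (fun _ => le_refl 1)
  rcases le_or_gt 0 j with h | h
  · have := hb 0 j h
    omega
  · have := hb j 0 (by omega)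
    omega

lemma crep_n_of_mem (hov : ∀ v ∈ lang X, IsOverlap w v → v = w)
    {x : Seq} (hx : x ∈ X) : CRep w D w.length x (relabel w D x) := by
  refine ⟨id, ?_, ?_, ?_, ?_⟩
  · intro j
    show (j + 1 : ℤ) = j + _
    split <;> push_cast <;> ring
  · intro j k hk hocc
    exact relabel_occ hov hx hk hocc
  · intro j hno
    exact relabel_no hno
  · intro i _
    exact ⟨i, rfl⟩

lemma crep_n_eq (hX : IsSubshift A X) (hov : ∀ v ∈ lang X, IsOverlap w v → v = w)
    {x y : Seq} (hx : x ∈ X) (hcr : CRep w D w.length x y) :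
    ∃ x' ∈ X, y = relabel w D x' := by
  obtain ⟨q, hrec, hlet, helse, hsurj⟩ := hcr
  have hstep : ∀ j : ℤ, q (j + 1) = q j + 1 := by
    intro j
    rw [hrec j]
    split <;> push_cast <;> ring
  have haff := walk_affine hstep
  refine ⟨shiftBy (q 0) x, shiftBy_mem hX (q 0) hx, ?_⟩
  have hocc_iff : ∀ (t : ℤ) (k : ℕ),
      wordAt (shiftBy (q 0) x) (t - k) w.length = w ↔ wordAt x (q t - k) w.length = w := by
    intro t k
    rw [show wordAt (shiftBy (q 0) x) (t - (k:ℤ)) w.length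
        = wordAt x (t - (k:ℤ) + q 0) w.length from wordAt_shift x (q 0) _ _]
    have e : t - (k : ℤ) + q 0 = q t - k := by rw [haff t]; ring
    rw [e]
  funext t
  by_cases h : ∃ k : ℕ, k < w.length ∧ wordAt x (q t - k) w.length = w
  · obtain ⟨k, hk, hocc⟩ := h
    rw [relabel_occ hov (shiftBy_mem hX (q 0) hx) hk ((hocc_iff t k).2 hocc)]
    exact hlet t k hk hocc
  · push_neg at h
    rw [relabel_no (fun k hk => fun hc => h k hk ((hocc_iff t k).1 hc))]
    rw [helse t h]
    show _ = x (t + q 0)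
    rw [haff t]
    congr 1
    ring

end Relabel


section Conj

variable {A : Set ℕ} {X : Set Seq} {w : List ℕ} {D : ℕ → ℕ}

lemma wordAt_congr {x x' : Seq} {i : ℤ} {n : ℕ}
    (h : ∀ s : ℤ, i ≤ s → s < i + n → x s = x' s) : wordAt x i n = wordAt x' i n := by
  apply List.ext_get (by simp)
  intro j h1 h2
  simp only [wordAt, List.get_ofFn]
  apply h
  · omega
  · have : (j : ℤ) < n := by
      simp only [wordAt_length] at h1
      omega
    omega

lemma relabel_window (hov : ∀ v ∈ lang X, IsOverlap w v → v = w) (hwne : w ≠ [])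
    {x x' : Seq} (hx : x ∈ X) (hx' : x' ∈ X) (t : ℤ)
    (hagree : ∀ i ∈ Finset.Icc (t - (w.length : ℤ) + 1) (t + w.length - 1), x i = x' i) :
    relabel w D x t = relabel w D x' t := by
  have hn1 : 1 ≤ w.length := List.length_pos_iff.2 hwne
  have htrans : ∀ k : ℕ, k < w.length →
      wordAt x (t - k) w.length = wordAt x' (t - k) w.length := by
    intro k hk
    apply wordAt_congr
    intro s h1 h2
    apply hagree
    rw [Finset.mem_Icc]
    omega
  by_cases h : ∃ k : ℕ, k < w.length ∧ wordAt x (t - k) w.length = w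
  · obtain ⟨k, hk, hocc⟩ := h
    rw [relabel_occ hov hx hk hocc,
      relabel_occ hov hx' hk ((htrans k hk) ▸ hocc)]
  · push_neg at h
    rw [relabel_no h, relabel_no (fun k hk hc => h k hk ((htrans k hk).symm ▸ hc))]
    apply hagree
    rw [Finset.mem_Icc]
    omega

lemma relabel_shift (hX : IsSubshift A X) (hov : ∀ v ∈ lang X, IsOverlap w v → v = w)
    {x : Seq} (hx : x ∈ X) : shift (relabel w D x) = relabel w D (shift x) := by
  have hsx : shift x ∈ X := (hX.2.2.1 x).1 hx
  funext t
  have htrans : ∀ k : ℕ,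
      wordAt (shift x) (t - k) w.length = wordAt x (t + 1 - k) w.length := by
    intro k
    rw [show wordAt (shift x) (t - (k:ℤ)) w.length
        = wordAt x (t - (k:ℤ) + 1) w.length from wordAt_shift x 1 _ _]
    congr 1
    ring
  show relabel w D x (t + 1) = relabel w D (shift x) t
  by_cases h : ∃ k : ℕ, k < w.length ∧ wordAt x (t + 1 - k) w.length = w
  · obtain ⟨k, hk, hocc⟩ := h
    rw [relabel_occ hov hx hk hocc, relabel_occ hov hsx hk ((htrans k).symm ▸ hocc)]
  · push_neg at h
    rw [relabel_no (fun k hk hc => h k hk hc),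
      relabel_no (fun k hk hc => h k hk ((htrans k) ▸ hc))]
    rfl

lemma conjugate_crepn (hX : IsSubshift A X) (hov : ∀ v ∈ lang X, IsOverlap w v → v = w)
    (hDA : ∀ k, D k ∉ A) (hDinj : Function.Injective D) (hwne : w ≠ []) :
    Conjugate X {y | ∃ x ∈ X, CRep w D w.length x y} := by
  classical
  set E : Set Seq := {y | ∃ x ∈ X, CRep w D w.length x y} with hE
  have hmemE : ∀ x : ↥X, relabel w D x.1 ∈ E := fun x => ⟨x.1, x.2, crep_n_of_mem hov x.2⟩
  have hback : ∀ y : ↥E, unrelabel w D y.1 ∈ X ∧ relabel w D (unrelabel w D y.1) = y.1 := by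
    intro y
    obtain ⟨x, hx, hcr⟩ := y.2
    obtain ⟨x', hx', heq⟩ := crep_n_eq hX hov hx hcr
    constructor
    · rw [heq, unrelabel_relabel hX hov hDA hDinj hx']
      exact hx'
    · rw [heq, unrelabel_relabel hX hov hDA hDinj hx']
  set Φ : ↥X → ↥E := fun x => ⟨relabel w D x.1, hmemE x⟩ with hΦ
  set Ψ : ↥E → ↥X := fun y => ⟨unrelabel w D y.1, (hback y).1⟩ with hΨ
  have hleft : Function.LeftInverse Ψ Φ := by
    intro x
    apply Subtype.ext
    exact unrelabel_relabel hX hov hDA hDinj x.2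
  have hright : Function.RightInverse Ψ Φ := by
    intro y
    apply Subtype.ext
    exact (hback y).2
  have hcontΦ : Continuous Φ := by
    apply Continuous.subtype_mk
    apply continuous_pi
    intro t
    apply continuous_of_window
    intro x
    refine ⟨Finset.Icc (t - (w.length : ℤ) + 1) (t + w.length - 1), ?_⟩
    intro x' hagree
    exact relabel_window hov hwne x'.2 x.2 t hagree
  have hcontΨ : Continuous Ψ := by
    apply Continuous.subtype_mk
    apply continuous_pi
    intro t
    apply continuous_of_window
    intro y
    refine ⟨{t}, ?_⟩
    intro y' hagree
    exact unrelabel_congr hDinj (hagree t (Finset.mem_singleton_self t))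
  refine ⟨Homeomorph.mk ⟨Φ, Ψ, hleft, hright⟩ hcontΦ hcontΨ, ?_⟩
  intro x y hshift
  show shift (relabel w D x.1) = relabel w D y.1
  rw [← hshift]
  exact relabel_shift hX hov x.2

end Conj

section SEsubshift

lemma subshift_compact {B : Set ℕ} {Z : Set Seq} (hZ : IsSubshift B Z) : IsCompact Z := by
  apply IsCompact.of_isClosed_subset (isCompact_univ_pi (fun _ : ℤ => hZ.1.isCompact)) hZ.2.1
  intro x hx
  rw [Set.mem_univ_pi]
  exact fun i => hZ.2.2.2 x hx i

lemma symbolExpansion_letters {B : Set ℕ} {Z : Set Seq} (hZ : IsSubshift B Z) (a e : ℕ)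
    {y : Seq} (hy : y ∈ symbolExpansion Z a e) : ∀ t, y t ∈ B ∪ {e} := by
  obtain ⟨x, hx, p, hp0, hprec, hpy, hpd⟩ := hy
  intro t
  rcases expand_cover hp0 hprec t with ⟨k, hk⟩ | ⟨k, hk, hak⟩
  · rw [← hk, hpy k]
    exact Or.inl (hZ.2.2.2 x hx k)
  · rw [← hk, hpd k hak]
    exact Or.inr rfl

lemma symbolExpansion_shiftInv {B : Set ℕ} {Z : Set Seq} (hZ : IsSubshift B Z) (a e : ℕ) :
    ∀ y, y ∈ symbolExpansion Z a e ↔ shift y ∈ symbolExpansion Z a e := by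
  intro y
  constructor
  · rintro ⟨x, hx, p, hp0, hprec, hpy, hpd⟩
    rcases hp0 with hp0 | hp0
    · refine ⟨x, hx, fun k => p k - 1, Or.inr (by show p 0 - 1 = -1; omega), ?_, ?_, ?_⟩
      · intro k
        show p (k + 1) - 1 = p k - 1 + if x k = a then 2 else 1
        have := hprec k
        omega
      · intro k
        show y (p k - 1 + 1) = x k
        rw [show p k - 1 + 1 = p k by ring]
        exact hpy k
      · intro k hk
        show y (p k - 1 + 1 + 1) = e
        rw [show p k - 1 + 1 + 1 = p k + 1 by ring]
        exact hpd k hk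
    · refine ⟨shift x, (hZ.2.2.1 x).1 hx, fun k => p (k + 1) - 1, ?_, ?_, ?_, ?_⟩
      · have := hprec 0
        rw [hp0] at this
        show p (0 + 1) - 1 = 0 ∨ p (0 + 1) - 1 = -1
        split at this <;> omega
      · intro k
        have := hprec (k + 1)
        show p (k + 1 + 1) - 1 = p (k + 1) - 1 + if x (k + 1) = a then 2 else 1
        omega
      · intro k
        show y (p (k + 1) - 1 + 1) = x (k + 1)
        rw [show p (k + 1) - 1 + 1 = p (k + 1) by ring]
        exact hpy (k + 1)
      · intro k hk
        show y (p (k + 1) - 1 + 1 + 1) = e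
        rw [show p (k + 1) - 1 + 1 + 1 = p (k + 1) + 1 by ring]
        exact hpd (k + 1) hk
  · rintro ⟨x, hx, p, hp0, hprec, hpy, hpd⟩
    rcases hp0 with hp0 | hp0
    · refine ⟨shiftBy (-1) x, shiftBy_mem hZ (-1) hx, fun k => p (k - 1) + 1, ?_, ?_, ?_, ?_⟩
      · have h := hprec (-1)
        rw [show (-1 : ℤ) + 1 = 0 by ring, hp0] at h
        show p (0 - 1) + 1 = 0 ∨ p (0 - 1) + 1 = -1
        rw [show (0 : ℤ) - 1 = -1 by ring]
        split at h <;> omega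
      · intro k
        have h := hprec (k - 1)
        rw [show k - 1 + 1 = k by ring] at h
        show p (k + 1 - 1) + 1 = p (k - 1) + 1 + if shiftBy (-1) x k = a then 2 else 1
        rw [show k + 1 - 1 = k by ring]
        show p k + 1 = p (k - 1) + 1 + if x (k + -1) = a then 2 else 1
        rw [show k + (-1 : ℤ) = k - 1 by ring]
        omega
      · intro k
        show y (p (k - 1) + 1) = x (k + -1)
        have := hpy (k - 1)
        rw [show k + (-1 : ℤ) = k - 1 by ring]
        exact this
      · intro k hk
        show y (p (k - 1) + 1 + 1) = e
        have hk' : x (k - 1) = a := by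
          rw [show k - (1:ℤ) = k + -1 by ring]
          exact hk
        exact hpd (k - 1) hk'
    · refine ⟨x, hx, fun k => p k + 1, Or.inl (by show p 0 + 1 = 0; omega), ?_, ?_, ?_⟩
      · intro k
        show p (k + 1) + 1 = p k + 1 + if x k = a then 2 else 1
        have := hprec k
        omega
      · intro k
        show y (p k + 1) = x k
        exact hpy k
      · intro k hk
        show y (p k + 1 + 1) = e
        exact hpd k hk

lemma symbolExpansion_isClosed_s2 {B : Set ℕ} {Z : Set Seq} (hZ : IsSubshift B Z) (a e : ℕ) :
    IsClosed (symbolExpansion Z a e) := by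
  classical
  set K : Set (ℤ → ℤ) :=
    Set.univ.pi (fun k : ℤ => Set.Icc (-(2 * (k.natAbs : ℤ) + 1)) (2 * (k.natAbs : ℤ) + 1))
    with hK
  set P : Set Seq := Set.univ.pi (fun _ : ℤ => B ∪ {e}) with hP
  set T : Set (Seq × (ℤ → ℤ) × Seq) := {v | v.1 ∈ Z ∧ v.2.1 ∈ K ∧ v.2.2 ∈ P ∧
    (v.2.1 0 = 0 ∨ v.2.1 0 = -1) ∧
    (∀ k : ℤ, v.2.1 (k + 1) = v.2.1 k + if v.1 k = a then 2 else 1) ∧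
    (∀ k : ℤ, v.2.2 (v.2.1 k) = v.1 k) ∧
    (∀ k : ℤ, v.1 k = a → v.2.2 (v.2.1 k + 1) = e)} with hT
  -- continuity of the basic maps
  have cx : ∀ k : ℤ, Continuous (fun v : Seq × (ℤ → ℤ) × Seq => v.1 k) :=
    fun k => (continuous_apply k).comp continuous_fst
  have cq : ∀ k : ℤ, Continuous (fun v : Seq × (ℤ → ℤ) × Seq => v.2.1 k) :=
    fun k => (continuous_apply k).comp (continuous_fst.comp continuous_snd)
  have cy : Continuous (fun v : Seq × (ℤ → ℤ) × Seq => v.2.2) :=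
    continuous_snd.comp continuous_snd
  have cyq : ∀ c : ℤ, Continuous (fun v : Seq × (ℤ → ℤ) × Seq => v.2.2 (v.2.1 c + 1)) := by
    intro c
    exact continuous_eval2 _ _ cy ((cq c).add continuous_const)
  have cyq0 : ∀ c : ℤ, Continuous (fun v : Seq × (ℤ → ℤ) × Seq => v.2.2 (v.2.1 c)) := by
    intro c
    exact continuous_eval2 _ _ cy (cq c)
  have hTclosed : IsClosed T := by
    have h1 : IsClosed {v : Seq × (ℤ → ℤ) × Seq | v.1 ∈ Z} := hZ.2.1.preimage continuous_fst
    have h2 : IsClosed {v : Seq × (ℤ → ℤ) × Seq | v.2.1 ∈ K} :=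
      (isClosed_set_pi (fun k _ => isClosed_discrete _)).preimage
        (continuous_fst.comp continuous_snd)
    have h3 : IsClosed {v : Seq × (ℤ → ℤ) × Seq | v.2.2 ∈ P} :=
      (isClosed_set_pi (fun k _ => isClosed_discrete _)).preimage cy
    have h4 : IsClosed {v : Seq × (ℤ → ℤ) × Seq | v.2.1 0 = 0 ∨ v.2.1 0 = -1} := by
      rw [Set.setOf_or]
      exact (isClosed_eq (cq 0) continuous_const).union (isClosed_eq (cq 0) continuous_const)
    have h5 : IsClosed {v : Seq × (ℤ → ℤ) × Seq |
        ∀ k : ℤ, v.2.1 (k + 1) = v.2.1 k + if v.1 k = a then 2 else 1} := by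
      rw [Set.setOf_forall]
      apply isClosed_iInter
      intro k
      have : {v : Seq × (ℤ → ℤ) × Seq | v.2.1 (k + 1) = v.2.1 k + if v.1 k = a then 2 else 1} =
          ({v | v.1 k = a} ∩ {v | v.2.1 (k + 1) = v.2.1 k + 2}) ∪
            ({v | v.1 k = a}ᶜ ∩ {v | v.2.1 (k + 1) = v.2.1 k + 1}) := by
        ext v
        simp only [Set.mem_setOf_eq, Set.mem_union, Set.mem_inter_iff, Set.mem_compl_iff]
        by_cases hv : v.1 k = a
        · simp [hv]
        · simp [hv]
      rw [this]
      apply IsClosed.union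
      · exact (isClosed_eq (cx k) continuous_const).inter
          (isClosed_eq (cq (k + 1)) ((cq k).add continuous_const))
      · have hopen : IsOpen {v : Seq × (ℤ → ℤ) × Seq | v.1 k = a} := by
          have := (isOpen_discrete ({a} : Set ℕ)).preimage (cx k)
          exact this
        exact (isClosed_compl_iff.mpr hopen).inter
          (isClosed_eq (cq (k + 1)) ((cq k).add continuous_const))
    have h6 : IsClosed {v : Seq × (ℤ → ℤ) × Seq | ∀ k : ℤ, v.2.2 (v.2.1 k) = v.1 k} := by
      rw [Set.setOf_forall]
      exact isClosed_iInter (fun k => isClosed_eq (cyq0 k) (cx k))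
    have h7 : IsClosed {v : Seq × (ℤ → ℤ) × Seq |
        ∀ k : ℤ, v.1 k = a → v.2.2 (v.2.1 k + 1) = e} := by
      rw [Set.setOf_forall]
      apply isClosed_iInter
      intro k
      have : {v : Seq × (ℤ → ℤ) × Seq | v.1 k = a → v.2.2 (v.2.1 k + 1) = e} =
          {v | v.1 k = a}ᶜ ∪ {v | v.2.2 (v.2.1 k + 1) = e} := by
        ext v
        simp only [Set.mem_setOf_eq, Set.mem_union, Set.mem_compl_iff]
        tauto
      rw [this]
      have hopen : IsOpen {v : Seq × (ℤ → ℤ) × Seq | v.1 k = a} := by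
        have := (isOpen_discrete ({a} : Set ℕ)).preimage (cx k)
        exact this
      exact (isClosed_compl_iff.mpr hopen).union
        (isClosed_eq (cyq k) continuous_const)
    exact h1.inter (h2.inter (h3.inter (h4.inter (h5.inter (h6.inter h7)))))
  have hKcomp : IsCompact K :=
    isCompact_univ_pi (fun k => (Set.finite_Icc _ _).isCompact)
  have hPcomp : IsCompact P :=
    isCompact_univ_pi (fun _ => ((hZ.1.union (Set.finite_singleton e)).isCompact))
  have hTsub : T ⊆ Z ×ˢ (K ×ˢ P) := by
    rintro ⟨x, p, y⟩ hv
    exact ⟨hv.1, hv.2.1, hv.2.2.1⟩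
  have hTcomp : IsCompact T :=
    IsCompact.of_isClosed_subset ((subshift_compact hZ).prod (hKcomp.prod hPcomp))
      hTclosed hTsub
  have him : symbolExpansion Z a e = (fun v : Seq × (ℤ → ℤ) × Seq => v.2.2) '' T := by
    ext y
    constructor
    · intro hy
      obtain ⟨x, hx, p, hp0, hprec, hpy, hpd⟩ := hy
      refine ⟨(x, p, y), ⟨hx, ?_, ?_, hp0, hprec, hpy, hpd⟩, rfl⟩
      · rw [Set.mem_univ_pi]
        intro k
        have hb := walk_bound (s := fun k => if x k = a then 2 else 1) hprec
          (fun j => by show (1:ℤ) ≤ if x j = a then 2 else 1; split <;> omega)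
          (c := 2) (fun j => by show (if x j = a then 2 else 1 : ℤ) ≤ 2; split <;> omega)
        rw [Set.mem_Icc]
        show -(2 * (k.natAbs : ℤ) + 1) ≤ p k ∧ p k ≤ 2 * (k.natAbs : ℤ) + 1
        rcases le_or_gt 0 k with h0 | h0
        · have := hb 0 k h0
          omega
        · have := hb k 0 (by omega)
          omega
      · rw [Set.mem_univ_pi]
        exact symbolExpansion_letters hZ a e ⟨x, hx, p, hp0, hprec, hpy, hpd⟩
    · rintro ⟨v, ⟨hv1, _, _, h4, h5, h6, h7⟩, rfl⟩
      exact ⟨v.1, hv1, v.2.1, h4, h5, h6, h7⟩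
  rw [him]
  exact (hTcomp.image (continuous_snd.comp continuous_snd)).isClosed

lemma symbolExpansion_isSubshift {B : Set ℕ} {Z : Set Seq} (hZ : IsSubshift B Z) (a e : ℕ) :
    IsSubshift (B ∪ {e}) (symbolExpansion Z a e) := by
  refine ⟨hZ.1.union (Set.finite_singleton e), symbolExpansion_isClosed_s2 hZ a e,
    symbolExpansion_shiftInv hZ a e, ?_⟩
  intro y hy t
  exact symbolExpansion_letters hZ a e hy t

end SEsubshift

section WRsubshift

variable {A : Set ℕ} {X : Set Seq} {w : List ℕ} {d : ℕ}

lemma wordReplace_letters (hX : IsSubshift A X) {y : Seq} (hy : y ∈ wordReplace X w d) :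
    ∀ j, y j ∈ A ∪ {d} := by
  obtain ⟨x, hx, q, hrec, hval, hsurj⟩ := hy
  intro j
  rw [hval j]
  split
  · exact Or.inr rfl
  · exact Or.inl (hX.2.2.2 x hx _)

lemma wordReplace_shiftInv :
    ∀ y, y ∈ wordReplace X w d ↔ shift y ∈ wordReplace X w d := by
  intro y
  constructor
  · rintro ⟨x, hx, q, hrec, hval, hsurj⟩
    refine ⟨x, hx, fun j => q (j + 1), ?_, ?_, ?_⟩
    · intro j
      show q (j + 1 + 1) = q (j + 1) + _
      exact hrec (j + 1)
    · intro j
      show y (j + 1) = _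
      exact hval (j + 1)
    · intro i hi
      obtain ⟨j, hj⟩ := hsurj i hi
      refine ⟨j - 1, ?_⟩
      show q (j - 1 + 1) = i
      rw [show j - 1 + 1 = j by ring]
      exact hj
  · rintro ⟨x, hx, q, hrec, hval, hsurj⟩
    refine ⟨x, hx, fun j => q (j - 1), ?_, ?_, ?_⟩
    · intro j
      show q (j + 1 - 1) = q (j - 1) + _
      rw [show j + 1 - 1 = j - 1 + 1 by ring]
      exact hrec (j - 1)
    · intro j
      show y j = _
      have := hval (j - 1)
      rw [show shift y (j - 1) = y j by rw [shift]; congr 1; ring] at this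
      exact this
    · intro i hi
      obtain ⟨j, hj⟩ := hsurj i hi
      refine ⟨j + 1, ?_⟩
      show q (j + 1 - 1) = i
      rw [show j + 1 - 1 = j by ring]
      exact hj

lemma wordReplace_isClosed (hX : IsSubshift A X) (hwne : w ≠ []) :
    IsClosed (wordReplace X w d) := by
  classical
  have hn1 : 1 ≤ w.length := List.length_pos_iff.2 hwne
  set n : ℕ := w.length with hn
  set K : Set (ℤ → ℤ) :=
    Set.univ.pi (fun j : ℤ => Set.Icc (-((n : ℤ) * (j.natAbs : ℤ))) ((n : ℤ) * (j.natAbs : ℤ)))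
    with hK
  set P : Set Seq := Set.univ.pi (fun _ : ℤ => A ∪ {d}) with hP
  set T : Set (Seq × (ℤ → ℤ) × Seq) := {v | v.1 ∈ X ∧ v.2.1 ∈ K ∧ v.2.2 ∈ P ∧
    (∀ j : ℤ, v.2.1 (j + 1) = v.2.1 j +
      if wordAt v.1 (v.2.1 j) w.length = w then (w.length : ℤ) else 1) ∧
    (∀ j : ℤ, v.2.2 j = if wordAt v.1 (v.2.1 j) w.length = w then d else v.1 (v.2.1 j)) ∧
    (∀ i : ℤ, wordAt v.1 i w.length = w →
      ∃ j ∈ Finset.Icc (-(i.natAbs : ℤ)) ((i.natAbs : ℤ)), v.2.1 j = i)} with hT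
  have cq : ∀ k : ℤ, Continuous (fun v : Seq × (ℤ → ℤ) × Seq => v.2.1 k) :=
    fun k => (continuous_apply k).comp (continuous_fst.comp continuous_snd)
  have cy : ∀ k : ℤ, Continuous (fun v : Seq × (ℤ → ℤ) × Seq => v.2.2 k) :=
    fun k => (continuous_apply k).comp (continuous_snd.comp continuous_snd)
  have cxG : ∀ G : (Seq × (ℤ → ℤ) × Seq) → ℤ, Continuous G →
      Continuous (fun v : Seq × (ℤ → ℤ) × Seq => v.1 (G v)) :=
    fun G hG => continuous_eval2 _ _ continuous_fst hG
  have hOcc : ∀ (G : (Seq × (ℤ → ℤ) × Seq) → ℤ), Continuous G →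
      IsClosed {v : Seq × (ℤ → ℤ) × Seq | wordAt v.1 (G v) w.length = w} ∧
      IsOpen {v : Seq × (ℤ → ℤ) × Seq | wordAt v.1 (G v) w.length = w} := by
    intro G hG
    have hrw : {v : Seq × (ℤ → ℤ) × Seq | wordAt v.1 (G v) w.length = w} =
        ⋂ k : Fin w.length, {v : Seq × (ℤ → ℤ) × Seq | v.1 (G v + (k : ℤ)) = w.get k} := by
      ext v
      simp only [Set.mem_setOf_eq, Set.mem_iInter]
      rw [wordAt_eq_iff]
      constructor
      · intro h k
        exact h k k.2
      · intro h k hk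
        exact h ⟨k, hk⟩
    have hc : ∀ k : Fin w.length,
        Continuous (fun v : Seq × (ℤ → ℤ) × Seq => v.1 (G v + (k : ℤ))) :=
      fun k => cxG _ (hG.add continuous_const)
    constructor
    · rw [hrw]
      exact isClosed_iInter (fun k => isClosed_eq (hc k) continuous_const)
    · rw [hrw]
      apply isOpen_iInter_of_finite
      intro k
      have : IsOpen ((fun v : Seq × (ℤ → ℤ) × Seq => v.1 (G v + (k : ℤ))) ⁻¹'
          {w.get k}) := (isOpen_discrete _).preimage (hc k)
      exact this
  have hTclosed : IsClosed T := by
    have h1 : IsClosed {v : Seq × (ℤ → ℤ) × Seq | v.1 ∈ X} := hX.2.1.preimage continuous_fst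
    have h2 : IsClosed {v : Seq × (ℤ → ℤ) × Seq | v.2.1 ∈ K} :=
      (isClosed_set_pi (fun k _ => isClosed_discrete _)).preimage
        (continuous_fst.comp continuous_snd)
    have h3 : IsClosed {v : Seq × (ℤ → ℤ) × Seq | v.2.2 ∈ P} :=
      (isClosed_set_pi (fun k _ => isClosed_discrete _)).preimage
        (continuous_snd.comp continuous_snd)
    have h4 : IsClosed {v : Seq × (ℤ → ℤ) × Seq | ∀ j : ℤ, v.2.1 (j + 1) = v.2.1 j +
        if wordAt v.1 (v.2.1 j) w.length = w then (w.length : ℤ) else 1} := by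
      rw [Set.setOf_forall]
      apply isClosed_iInter
      intro j
      have hrw : {v : Seq × (ℤ → ℤ) × Seq | v.2.1 (j + 1) = v.2.1 j +
          if wordAt v.1 (v.2.1 j) w.length = w then (w.length : ℤ) else 1} =
          ({v | wordAt v.1 (v.2.1 j) w.length = w} ∩
            {v | v.2.1 (j + 1) = v.2.1 j + (w.length : ℤ)}) ∪
          ({v | wordAt v.1 (v.2.1 j) w.length = w}ᶜ ∩
            {v | v.2.1 (j + 1) = v.2.1 j + 1}) := by
        ext v
        simp only [Set.mem_setOf_eq, Set.mem_union, Set.mem_inter_iff, Set.mem_compl_iff]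
        by_cases hv : wordAt v.1 (v.2.1 j) w.length = w
        · simp [hv]
        · simp [hv]
      rw [hrw]
      apply IsClosed.union
      · exact ((hOcc _ (cq j)).1).inter (isClosed_eq (cq (j + 1)) ((cq j).add continuous_const))
      · exact (isClosed_compl_iff.mpr (hOcc _ (cq j)).2).inter
          (isClosed_eq (cq (j + 1)) ((cq j).add continuous_const))
    have h5 : IsClosed {v : Seq × (ℤ → ℤ) × Seq | ∀ j : ℤ, v.2.2 j =
        if wordAt v.1 (v.2.1 j) w.length = w then d else v.1 (v.2.1 j)} := by
      rw [Set.setOf_forall]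
      apply isClosed_iInter
      intro j
      have hrw : {v : Seq × (ℤ → ℤ) × Seq | v.2.2 j =
          if wordAt v.1 (v.2.1 j) w.length = w then d else v.1 (v.2.1 j)} =
          ({v | wordAt v.1 (v.2.1 j) w.length = w} ∩ {v | v.2.2 j = d}) ∪
          ({v | wordAt v.1 (v.2.1 j) w.length = w}ᶜ ∩
            {v | v.2.2 j = v.1 (v.2.1 j)}) := by
        ext v
        simp only [Set.mem_setOf_eq, Set.mem_union, Set.mem_inter_iff, Set.mem_compl_iff]
        by_cases hv : wordAt v.1 (v.2.1 j) w.length = w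
        · simp [hv]
        · simp [hv]
      rw [hrw]
      apply IsClosed.union
      · exact ((hOcc _ (cq j)).1).inter (isClosed_eq (cy j) continuous_const)
      · exact (isClosed_compl_iff.mpr (hOcc _ (cq j)).2).inter
          (isClosed_eq (cy j) (cxG _ (cq j)))
    have h6 : IsClosed {v : Seq × (ℤ → ℤ) × Seq | ∀ i : ℤ, wordAt v.1 i w.length = w →
        ∃ j ∈ Finset.Icc (-(i.natAbs : ℤ)) ((i.natAbs : ℤ)), v.2.1 j = i} := by
      rw [Set.setOf_forall]
      apply isClosed_iInter
      intro i
      have hrw : {v : Seq × (ℤ → ℤ) × Seq | wordAt v.1 i w.length = w →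
          ∃ j ∈ Finset.Icc (-(i.natAbs : ℤ)) ((i.natAbs : ℤ)), v.2.1 j = i} =
          {v | wordAt v.1 i w.length = w}ᶜ ∪
            ⋃ j ∈ Finset.Icc (-(i.natAbs : ℤ)) ((i.natAbs : ℤ)), {v | v.2.1 j = i} := by
        ext v
        simp only [Set.mem_setOf_eq, Set.mem_union, Set.mem_compl_iff, Set.mem_iUnion,
          exists_prop]
        tauto
      rw [hrw]
      apply IsClosed.union
      · exact isClosed_compl_iff.mpr (hOcc (fun _ => i) continuous_const).2
      · exact Set.Finite.isClosed_biUnion (Finset.Icc _ _).finite_toSet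
          (fun j _ => isClosed_eq (cq j) continuous_const)
    exact h1.inter (h2.inter (h3.inter (h4.inter (h5.inter h6))))
  have hKcomp : IsCompact K :=
    isCompact_univ_pi (fun k => (Set.finite_Icc _ _).isCompact)
  have hPcomp : IsCompact P :=
    isCompact_univ_pi (fun _ => ((hX.1.union (Set.finite_singleton d)).isCompact))
  have hTsub : T ⊆ X ×ˢ (K ×ˢ P) := by
    rintro ⟨x, q, y⟩ hv
    exact ⟨hv.1, hv.2.1, hv.2.2.1⟩
  have hTcomp : IsCompact T :=
    IsCompact.of_isClosed_subset ((subshift_compact hX).prod (hKcomp.prod hPcomp))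
      hTclosed hTsub
  have him : wordReplace X w d = (fun v : Seq × (ℤ → ℤ) × Seq => v.2.2) '' T := by
    ext y
    constructor
    · rintro ⟨x, hx, q, hrec, hval, hsurj⟩
      set x' : Seq := shiftBy (q 0) x with hx'def
      have hx' : x' ∈ X := shiftBy_mem hX (q 0) hx
      set q' : ℤ → ℤ := fun j => q j - q 0 with hq'def
      have htrans : ∀ j : ℤ, wordAt x' (q' j) w.length = wordAt x (q j) w.length := by
        intro j
        rw [show wordAt x' (q' j) w.length = wordAt x (q' j + q 0) w.length from
          wordAt_shift x (q 0) _ _]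
        congr 1
        show q j - q 0 + q 0 = q j
        ring
      have htrans' : ∀ i : ℤ, wordAt x' i w.length = wordAt x (i + q 0) w.length := by
        intro i
        exact wordAt_shift x (q 0) _ _
      have hrec' : ∀ j : ℤ, q' (j + 1) = q' j +
          if wordAt x' (q' j) w.length = w then (w.length : ℤ) else 1 := by
        intro j
        show q (j + 1) - q 0 = q j - q 0 + _
        rw [htrans j, hrec j]
        ring
      have hb := walk_bound (s := fun j => if wordAt x' (q' j) w.length = w
          then (w.length : ℤ) else 1) hrec'
        (fun j => by
          show (1:ℤ) ≤ if wordAt x' (q' j) w.length = w then (w.length : ℤ) else 1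
          split <;> omega)
        (c := (w.length : ℤ)) (fun j => by
          show (if wordAt x' (q' j) w.length = w then (w.length : ℤ) else 1) ≤ (w.length : ℤ)
          split <;> omega)
      have hq'0 : q' 0 = 0 := by show q 0 - q 0 = 0; ring
      refine ⟨(x', q', y), ⟨hx', ?_, ?_, hrec', ?_, ?_⟩, rfl⟩
      · rw [Set.mem_univ_pi]
        intro j
        rw [Set.mem_Icc]
        show -((n : ℤ) * (j.natAbs : ℤ)) ≤ q' j ∧ q' j ≤ (n : ℤ) * (j.natAbs : ℤ)
        rcases le_or_gt 0 j with h0 | h0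
        · have h := hb 0 j h0
          rw [hq'0] at h
          have e : (n : ℤ) * (j.natAbs : ℤ) = (w.length : ℤ) * (j - 0) := by
            rw [hn]
            congr 1
            omega
          rw [e]
          omega
        · have h := hb j 0 (by omega)
          rw [hq'0] at h
          have e : (n : ℤ) * (j.natAbs : ℤ) = (w.length : ℤ) * (0 - j) := by
            rw [hn]
            congr 1
            omega
          constructor
          · rw [e]; omega
          · have h1 : q' j ≤ j := by omega
            have h2 : (0 : ℤ) ≤ (n : ℤ) * (j.natAbs : ℤ) :=
              mul_nonneg (by positivity) (by positivity)
            omega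
      · rw [Set.mem_univ_pi]
        intro j
        show y j ∈ A ∪ {d}
        rw [hval j]
        split
        · exact Or.inr rfl
        · exact Or.inl (hX.2.2.2 x hx _)
      · intro j
        show y j = if wordAt x' (q' j) w.length = w then d else x' (q' j)
        rw [hval j, htrans j]
        split
        · rfl
        · show x (q j) = x (q' j + q 0)
          congr 1
          show q j = q j - q 0 + q 0
          ring
      · intro i hi
        rw [show wordAt (x', q', y).1 i w.length = wordAt x (i + q 0) w.length
          from htrans' i] at hi
        obtain ⟨j, hj⟩ := hsurj (i + q 0) hi
        have hq'j : q' j = i := by show q j - q 0 = i; omega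
        refine ⟨j, ?_, hq'j⟩
        rw [Finset.mem_Icc]
        rcases le_or_gt 0 j with h0 | h0
        · have h := hb 0 j h0
          rw [hq'0] at h
          omega
        · have h := hb j 0 (by omega)
          rw [hq'0] at h
          omega
    · rintro ⟨v, ⟨hv1, _, _, h4, h5, h6⟩, rfl⟩
      refine ⟨v.1, hv1, v.2.1, h4, h5, ?_⟩
      intro i hi
      obtain ⟨j, _, hj⟩ := h6 i hi
      exact ⟨j, hj⟩
  rw [him]
  exact (hTcomp.image (continuous_snd.comp continuous_snd)).isClosed

lemma wordReplace_isSubshift (hX : IsSubshift A X) (hwne : w ≠ []) :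
    IsSubshift (A ∪ {d}) (wordReplace X w d) := by
  refine ⟨hX.1.union (Set.finite_singleton d), wordReplace_isClosed hX hwne,
    wordReplace_shiftInv, ?_⟩
  intro y hy j
  exact wordReplace_letters hX hy j

end WRsubshift


lemma flowEquiv_refl {Z : Set Seq} (h : IsShiftSpace Z) : FlowEquiv Z Z := by
  apply FlowEquiv.of_conjugate h h
  exact ⟨Homeomorph.refl _, fun x y hxy => hxy⟩


/-- If `X` is a shift space over a finite alphabet `A`,
`w ∈ B(X)` is a (nonempty) word such that `X` admits no non-trivial
`w`-overlaps, and `◇ = d` is a new symbol, then `X` is flow equivalent to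
`X^{w ↦ ◇}`. -/
theorem statement2 (A : Set ℕ) (X : Set Seq) (hX : IsSubshift A X)
    (w : List ℕ) (hw : w ∈ lang X) (hwne : w ≠ [])
    (hov : ∀ v ∈ lang X, IsOverlap w v → v = w)
    (d : ℕ) (hd : d ∉ A) :
    FlowEquiv X (wordReplace X w d) := by

  classical
  have hn1 : 1 ≤ w.length := List.length_pos_iff.2 hwne
  set n : ℕ := w.length with hn
  -- fresh symbols
  obtain ⟨N0, hN0⟩ : ∃ N0 : ℕ, ∀ a ∈ A ∪ {d}, a ≤ N0 := by
    obtain ⟨N0, hN0⟩ := (hX.1.union (Set.finite_singleton d)).bddAbove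
    exact ⟨N0, fun a ha => hN0 ha⟩
  set D : ℕ → ℕ := fun k => if k = 0 then d else N0 + 1 + k with hD
  have hD0 : D 0 = d := by rw [hD]; simp
  have hDbig : ∀ k, k ≠ 0 → D k = N0 + 1 + k := by
    intro k hk
    rw [hD]
    simp [hk]
  have hdA : d ≤ N0 := hN0 d (Or.inr rfl)
  have hDA : ∀ k, D k ∉ A := by
    intro k hkA
    by_cases hk : k = 0
    · rw [hk, hD0] at hkA
      exact hd hkA
    · rw [hDbig k hk] at hkA
      have := hN0 _ (Or.inl hkA)
      omega
  have hDinj : Function.Injective D := by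
    intro k k' hkk
    by_cases h1 : k = 0 <;> by_cases h2 : k' = 0
    · omega
    · rw [h1, hD0, hDbig k' h2] at hkk
      omega
    · rw [h2, hD0, hDbig k h1] at hkk
      omega
    · rw [hDbig k h1, hDbig k' h2] at hkk
      omega
  set E : ℕ → Set Seq := fun i =>
    Nat.rec (wordReplace X w d) (fun i Ei => symbolExpansion Ei (D i) (D (i + 1))) i with hE
  set Al : ℕ → Set ℕ := fun i => A ∪ (D '' Set.Iic i) with hAl
  have hAl0 : Al 0 = A ∪ {d} := by
    rw [hAl]
    simp only
    congr 1
    ext c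
    simp only [Set.mem_image, Set.mem_Iic, Set.mem_singleton_iff, Nat.le_zero]
    constructor
    · rintro ⟨k, rfl, rfl⟩
      exact hD0
    · rintro rfl
      exact ⟨0, rfl, hD0⟩
  have hAlstep : ∀ i : ℕ, Al i ∪ {D (i + 1)} = Al (i + 1) := by
    intro i
    rw [hAl]
    simp only
    ext c
    simp only [Set.mem_union, Set.mem_image, Set.mem_Iic, Set.mem_singleton_iff]
    constructor
    · rintro ((hc | ⟨k, hk, rfl⟩) | rfl)
      · exact Or.inl hc
      · exact Or.inr ⟨k, by omega, rfl⟩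
      · exact Or.inr ⟨i + 1, le_refl _, rfl⟩
    · rintro (hc | ⟨k, hk, rfl⟩)
      · exact Or.inl (Or.inl hc)
      · rcases Nat.lt_or_ge k (i + 1) with h | h
        · exact Or.inl (Or.inr ⟨k, by omega, rfl⟩)
        · have : k = i + 1 := by omega
          subst this
          exact Or.inr rfl
  have chain : ∀ i : ℕ, i + 1 ≤ n →
      IsSubshift (Al i) (E i) ∧ (E i = {y | ∃ x ∈ X, CRep w D (i + 1) x y}) ∧
        FlowEquiv (E 0) (E i) := by
    intro i
    induction i with
    | zero =>
        intro _
        have hsub : IsSubshift (Al 0) (E 0) := by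
          rw [hAl0]
          exact wordReplace_isSubshift hX hwne
        refine ⟨hsub, ?_, flowEquiv_refl ⟨Al 0, hsub⟩⟩
        show wordReplace X w d = _
        ext y
        constructor
        · rintro ⟨x, hx, hc⟩
          exact ⟨x, hx, (contractsTo_iff_crep1 hD0).1 hc⟩
        · rintro ⟨x, hx, hc⟩
          exact ⟨x, hx, (contractsTo_iff_crep1 hD0).2 hc⟩
    | succ i ih =>
        intro hi
        obtain ⟨hsub, hchar, hfe⟩ := ih (by omega)
        have hEstep : E (i + 1) = symbolExpansion (E i) (D i) (D (i + 1)) := rfl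
        have hDmem : D i ∈ Al i := Or.inr ⟨i, Set.mem_Iic.2 (le_refl i), rfl⟩
        have hDout : D (i + 1) ∉ Al i := by
          rintro (hc | ⟨k, hk, hkc⟩)
          · exact hDA (i + 1) hc
          · have h1 := hDinj hkc
            have h2 := Set.mem_Iic.1 hk
            omega
        have hsub' : IsSubshift (Al (i + 1)) (E (i + 1)) := by
          rw [← hAlstep i, hEstep]
          exact symbolExpansion_isSubshift hsub (D i) (D (i + 1))
        refine ⟨hsub', ?_, ?_⟩
        · rw [hEstep, hchar]
          apply Set.Subset.antisymm
          · have h := crep_expand_subset hX hov hDA hDinj (m := i + 1) (by omega) (by omega)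
            simpa using h
          · have h := crep_contract_subset hX hov hDA hDinj (m := i + 1) (by omega) (by omega)
            simpa using h
        · refine hfe.trans ?_
          rw [hEstep]
          exact FlowEquiv.expand (D i) (D (i + 1)) hsub hDmem hDout
  obtain ⟨hsubl, hcharl, hfel⟩ := chain (n - 1) (by omega)
  have hnn : n - 1 + 1 = n := by omega
  rw [hnn] at hcharl
  have hconj : Conjugate X (E (n - 1)) := by
    rw [hcharl]
    have := conjugate_crepn hX hov hDA hDinj hwne
    rw [← hn] at this
    exact this
  have h1 : FlowEquiv X (E (n - 1)) :=
    FlowEquiv.of_conjugate ⟨A, hX⟩ ⟨Al (n - 1), hsubl⟩ hconj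
  exact h1.trans hfel.symm

end SymbolicDynamics
end

section
/- Let X be a sofic shift. For each right ray x⁺ = x₁x₂x₃⋯ ∈ X⁺ there exists n ∈ ℕ such that P∞(x⁺) = P∞(x₁x₂⋯x_k) for all k ≥ n. -/
namespace SymbolicDynamics

/-! ### Labelled graphs and sofic shifts -/

/-- A labelled directed graph over the ambient alphabet `ℕ`. -/
structure LGraph where
  V : Type
  E : Type
  src : E → V
  tgt : E → V
  lab : E → ℕ

namespace LGraph

/-- Biinfinite edge paths in `G`. -/
def paths (G : LGraph) : Set (ℤ → G.E) := {e | ∀ i : ℤ, G.tgt (e i) = G.src (e (i + 1))}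

/-- The label sequence of a biinfinite edge path. -/
def labelMap (G : LGraph) (e : ℤ → G.E) : Seq := fun i => G.lab (e i)

/-- The shift space presented by the labelled graph `G`: label sequences of
biinfinite edge paths. -/
def presents (G : LGraph) : Set Seq := {y | ∃ e ∈ G.paths, G.labelMap e = y}

/-- No vertex emits two distinct edges with the same label. -/
def RightResolving (G : LGraph) : Prop :=
  ∀ e f : G.E, G.src e = G.src f → G.lab e = G.lab f → e = f

/-- The graph is strongly connected (irreducible). -/
def StronglyConnected (G : LGraph) : Prop :=
  ∀ u v : G.V, Relation.ReflTransGen (fun a b => ∃ e : G.E, G.src e = a ∧ G.tgt e = b) u v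

/-- The follower set of a vertex: label sequences of right-infinite paths
starting at that vertex. -/
def follower (G : LGraph) (v : G.V) : Set (ℕ → ℕ) :=
  {y | ∃ e : ℕ → G.E, G.src (e 0) = v ∧ (∀ i : ℕ, G.tgt (e i) = G.src (e (i + 1))) ∧
    ∀ i : ℕ, y i = G.lab (e i)}

/-- Distinct vertices have distinct follower sets. -/
def FollowerSeparated (G : LGraph) : Prop :=
  ∀ u v : G.V, G.follower u = G.follower v → u = v

end LGraph

/-- A shift space is sofic iff it is presented by some finite labelled graph. -/
def IsSofic (X : Set Seq) : Prop :=
  ∃ G : LGraph, Finite G.V ∧ Finite G.E ∧ G.presents = X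

/-! ### Rays and predecessor sets -/

/-- Right rays of `X`, encoded as `u : ℕ → ℕ` with `u k = x_k`. -/
def rayPlus (X : Set Seq) : Set (ℕ → ℕ) := {u | ∃ x ∈ X, ∀ k : ℕ, x (k : ℤ) = u k}

/-- Left rays of `X`, encoded as `u : ℕ → ℕ` with `u k = x_{-(k+1)}`. -/
def rayMinus (X : Set Seq) : Set (ℕ → ℕ) :=
  {u | ∃ x ∈ X, ∀ k : ℕ, x (-((k : ℤ) + 1)) = u k}

/-- The biinfinite sequence `y⁻ x⁺` obtained by gluing a left ray `u` and a
right ray `v` at the origin. -/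
def glue (u v : ℕ → ℕ) : Seq := fun i => if 0 ≤ i then v i.toNat else u (-(i + 1)).toNat

/-- The predecessor set `P∞(x⁺) = {y⁻ ∈ X⁻ : y⁻ x⁺ ∈ X}` of a right ray. -/
def predInf (X : Set Seq) (v : ℕ → ℕ) : Set (ℕ → ℕ) := {u | glue u v ∈ X}

/-- The left ray `y⁻ w` obtained by appending the word `w` to the left ray `u`. -/
def snocWord (u : ℕ → ℕ) (w : List ℕ) : ℕ → ℕ := fun k =>
  if h : k < w.length then w.get ⟨w.length - 1 - k, by omega⟩ else u (k - w.length)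

/-- The predecessor set `P∞(w) = {y⁻ ∈ X⁻ : y⁻ w ∈ X⁻}` of a word. -/
def predWord (X : Set Seq) (w : List ℕ) : Set (ℕ → ℕ) := {u | snocWord u w ∈ rayMinus X}

/-- The right ray `v x⁺` obtained by prepending the word `v` to the right ray `u`. -/
def consRay (v : List ℕ) (u : ℕ → ℕ) : ℕ → ℕ := fun k =>
  if h : k < v.length then v.get ⟨k, h⟩ else u (k - v.length)

/-- `P_l(w)`: words `v` of length at most `l` with `v w ∈ B(X)`. -/
def predLWord (X : Set Seq) (l : ℕ) (w : List ℕ) : Set (List ℕ) :=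
  {v | v ∈ lang X ∧ v.length ≤ l ∧ v ++ w ∈ lang X}

/-- `P_l(x⁺)`: words `v` of length at most `l` with `v x⁺ ∈ X⁺`. -/
def predLRay (X : Set Seq) (l : ℕ) (u : ℕ → ℕ) : Set (List ℕ) :=
  {v | v ∈ lang X ∧ v.length ≤ l ∧ consRay v u ∈ rayPlus X}

/-- The edge relation of the past set cover of `X`: an edge labelled `a` from
`P` to `P'` whenever there is a nonempty word `w ∈ B(X)` with `a w ∈ B(X)`,
`P = P∞(a w)` and `P' = P∞(w)`. -/
def pscEdge (X : Set Seq) (P P' : Set (ℕ → ℕ)) : Prop :=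
  ∃ (a : ℕ) (w : List ℕ), w ≠ [] ∧ w ∈ lang X ∧ (a :: w) ∈ lang X ∧
    P = predWord X (a :: w) ∧ P' = predWord X w

/-- The vertex set of the maximal essential subgraph of the past set cover: the
vertices lying on a biinfinite path in the past set cover. -/
def pscEssential (X : Set Seq) : Set (Set (ℕ → ℕ)) :=
  {P | ∃ Q : ℤ → Set (ℕ → ℕ), Q 0 = P ∧ ∀ i : ℤ, pscEdge X (Q i) (Q (i + 1))}

/-- Condition (∗) of Carlsen and Matsumoto. -/
def ConditionStar (X : Set Seq) : Prop :=
  ∀ (l : ℕ) (F : Set (List ℕ)), F.Infinite → F ⊆ lang X →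
    (∀ u ∈ F, ∀ v ∈ F, predLWord X l u = predLWord X l v) →
    ∃ u ∈ rayPlus X, ∀ w ∈ F, predLWord X l w = predLRay X l u

section Statement8Aux

variable {G : LGraph}

/-- A left-infinite path ending at `v` whose labels, read outward, are `w`. -/
def LP (G : LGraph) (v : G.V) (w : ℕ → ℕ) : Prop :=
  ∃ g : ℕ → G.E, G.tgt (g 0) = v ∧ (∀ m, G.tgt (g (m + 1)) = G.src (g m)) ∧
    ∀ m, G.lab (g m) = w m

/-- `e` is a right-infinite path starting at `v`. -/
def RP (G : LGraph) (e : ℕ → G.E) (v : G.V) : Prop :=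
  G.src (e 0) = v ∧ ∀ i, G.tgt (e i) = G.src (e (i + 1))

/-- Vertices from which a right-infinite path starts whose first `k` labels are
`u 0, …, u (k-1)`. -/
def Sfin (G : LGraph) (u : ℕ → ℕ) (k : ℕ) : Set G.V :=
  {v | ∃ e : ℕ → G.E, RP G e v ∧ ∀ i < k, G.lab (e i) = u i}

/-- Vertices from which a right-infinite path labelled `u` starts. -/
def Sinf (G : LGraph) (u : ℕ → ℕ) : Set G.V :=
  {v | ∃ e : ℕ → G.E, RP G e v ∧ ∀ i, G.lab (e i) = u i}

lemma glue_path (k : ℕ) (v : G.V) (g e : ℕ → G.E)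
    (hg0 : G.tgt (g 0) = v) (hg : ∀ m, G.tgt (g (m + 1)) = G.src (g m))
    (he : RP G e v) :
    ∃ f : ℤ → G.E, f ∈ G.paths ∧ (∀ i : ℤ, -(k : ℤ) ≤ i → f i = e (i + k).toNat) ∧
      ∀ m : ℕ, f (-((m : ℤ) + k + 1)) = g m := by
  refine ⟨fun i => if -(k : ℤ) ≤ i then e (i + k).toNat else g (-(i + k) - 1).toNat,
    ?_, ?_, ?_⟩
  · intro i
    by_cases h1 : -(k : ℤ) ≤ i
    · have h2 : -(k : ℤ) ≤ i + 1 := by omega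
      simp only [if_pos h1, if_pos h2]
      have h3 : (i + 1 + k).toNat = (i + k).toNat + 1 := by omega
      rw [h3]; exact he.2 _
    · by_cases h2 : -(k : ℤ) ≤ i + 1
      · simp only [if_neg h1, if_pos h2]
        have h3 : (-(i + k) - 1).toNat = 0 := by omega
        have h4 : (i + 1 + k).toNat = 0 := by omega
        rw [h3, h4, hg0, he.1]
      · simp only [if_neg h1, if_neg h2]
        have h3 : (-(i + k) - 1).toNat = (-(i + 1 + k) - 1).toNat + 1 := by omega
        rw [h3]; exact hg _
  · intro i hi; simp only [if_pos hi]
  · intro m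
    have h1 : ¬ -(k : ℤ) ≤ -((m : ℤ) + k + 1) := by omega
    simp only [if_neg h1]
    congr 1; omega

lemma split_path (k : ℕ) (f : ℤ → G.E) (hf : f ∈ G.paths) :
    LP G (G.src (f (-(k : ℤ)))) (fun m => G.lab (f (-((m : ℤ) + k + 1)))) ∧
      RP G (fun i : ℕ => f ((i : ℤ) - k)) (G.src (f (-(k : ℤ)))) := by
  refine ⟨⟨fun m => f (-((m : ℤ) + k + 1)), ?_, ?_, fun m => rfl⟩, ?_, ?_⟩
  · have h := hf (-(k : ℤ) - 1)
    have e2 : -(k : ℤ) - 1 + 1 = -(k : ℤ) := by omega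
    rw [e2] at h
    show G.tgt (f (-(((0 : ℕ) : ℤ) + k + 1))) = G.src (f (-(k : ℤ)))
    have e1 : -(((0 : ℕ) : ℤ) + k + 1) = -(k : ℤ) - 1 := by omega
    rw [e1]; exact h
  · intro m
    have h := hf (-((m : ℤ) + k + 2))
    have e2 : -((m : ℤ) + k + 2) + 1 = -((m : ℤ) + k + 1) := by omega
    rw [e2] at h
    show G.tgt (f (-(((m + 1 : ℕ) : ℤ) + k + 1))) = G.src (f (-((m : ℤ) + k + 1)))
    have e1 : -(((m + 1 : ℕ) : ℤ) + k + 1) = -((m : ℤ) + k + 2) := by push_cast; omega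
    rw [e1]; exact h
  · have e1 : ((0 : ℕ) : ℤ) - k = -(k : ℤ) := by omega
    simp only [e1]
  · intro i
    have h := hf ((i : ℤ) - k)
    have e1 : ((i + 1 : ℕ) : ℤ) - k = (i : ℤ) - k + 1 := by push_cast; omega
    simp only [e1]; exact h

lemma mem_predWord_iff (u uu : ℕ → ℕ) (k : ℕ) :
    uu ∈ predWord G.presents (List.ofFn fun idx : Fin k => u (idx : ℕ)) ↔
      ∃ v, LP G v uu ∧ v ∈ Sfin G u k := by
  set w : List ℕ := List.ofFn fun idx : Fin k => u (idx : ℕ) with hw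
  have hwl : w.length = k := by simp [hw]
  constructor
  · rintro ⟨x, ⟨f, hf, rfl⟩, hx⟩
    obtain ⟨⟨g, hg0, hg1, hg2⟩, hrp⟩ := split_path k f hf
    refine ⟨G.src (f (-(k : ℤ))), ⟨g, hg0, hg1, ?_⟩, ⟨fun i : ℕ => f ((i : ℤ) - k), hrp, ?_⟩⟩
    · intro m
      have h1 := hx (m + k)
      have e1 : -(((m + k : ℕ) : ℤ) + 1) = -((m : ℤ) + k + 1) := by push_cast; omega
      rw [e1] at h1
      have h2 : snocWord uu w (m + k) = uu m := by
        rw [snocWord, dif_neg (by omega)]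
        congr 1; omega
      rw [hg2 m]
      exact (h1.trans h2 : G.labelMap f (-((m : ℤ) + k + 1)) = uu m)
    · intro i hi
      have h1 := hx (k - i - 1)
      have e1 : -(((k - i - 1 : ℕ) : ℤ) + 1) = (i : ℤ) - k := by omega
      rw [e1] at h1
      have h2 : snocWord uu w (k - i - 1) = u i := by
        rw [snocWord, dif_pos (by omega)]
        simp only [List.get_eq_getElem, hw, List.getElem_ofFn, List.length_ofFn]
        congr 1
        omega
      exact (h1.trans h2 : G.labelMap f ((i : ℤ) - k) = u i)
  · rintro ⟨v, ⟨g, hg0, hg1, hg2⟩, ⟨e, he, hel⟩⟩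
    obtain ⟨f, hf, hfr, hfl⟩ := glue_path k v g e hg0 hg1 he
    refine ⟨G.labelMap f, ⟨f, hf, rfl⟩, ?_⟩
    intro m
    by_cases hm : m < k
    · have e1 : -((m : ℤ) + 1) + k = ((k - m - 1 : ℕ) : ℤ) := by omega
      have h1 : f (-((m : ℤ) + 1)) = e (k - m - 1) := by
        rw [hfr _ (by omega)]
        congr 1; omega
      have h2 : snocWord uu w m = u (k - m - 1) := by
        rw [snocWord, dif_pos (by omega)]
        simp only [List.get_eq_getElem, hw, List.getElem_ofFn, List.length_ofFn]
        congr 1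
        omega
      show G.lab (f (-((m : ℤ) + 1))) = snocWord uu w m
      rw [h1, h2, hel _ (by omega)]
    · have h1 : f (-((m : ℤ) + 1)) = g (m - k) := by
        have e1 : -((m : ℤ) + 1) = -(((m - k : ℕ) : ℤ) + k + 1) := by omega
        rw [e1, hfl]
      have h2 : snocWord uu w m = uu (m - k) := by
        rw [snocWord, dif_neg (by omega)]
        congr 1; omega
      show G.lab (f (-((m : ℤ) + 1))) = snocWord uu w m
      rw [h1, h2, hg2]

lemma mem_predInf_iff (u uu : ℕ → ℕ) :
    uu ∈ predInf G.presents u ↔ ∃ v, LP G v uu ∧ v ∈ Sinf G u := by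
  constructor
  · rintro hmem
    obtain ⟨f, hf, hlm⟩ := hmem
    obtain ⟨⟨g, hg0, hg1, hg2⟩, hrp⟩ := split_path 0 f hf
    refine ⟨G.src (f (-(0 : ℕ) : ℤ)), ⟨g, hg0, hg1, ?_⟩, ⟨fun i : ℕ => f ((i : ℤ) - 0), hrp, ?_⟩⟩
    · intro m
      rw [hg2 m]
      have h1 : G.labelMap f (-((m : ℤ) + 0 + 1)) = glue uu u (-((m : ℤ) + 0 + 1)) := by
        rw [hlm]
      have h2 : glue uu u (-((m : ℤ) + 0 + 1)) = uu m := by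
        rw [glue, if_neg (by omega)]
        congr 1; omega
      exact h1.trans h2
    · intro i
      have h1 : G.labelMap f ((i : ℤ) - 0) = glue uu u ((i : ℤ) - 0) := by rw [hlm]
      have h2 : glue uu u ((i : ℤ) - 0) = u i := by
        rw [glue, if_pos (by omega)]
        have e1 : ((i : ℤ) - 0).toNat = i := by omega
        rw [e1]
      exact h1.trans h2
  · rintro ⟨v, ⟨g, hg0, hg1, hg2⟩, ⟨e, he, hel⟩⟩
    obtain ⟨f, hf, hfr, hfl⟩ := glue_path 0 v g e hg0 hg1 he
    refine ⟨f, hf, ?_⟩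
    funext i
    by_cases hi : 0 ≤ i
    · have h1 : f i = e (i + 0).toNat := hfr i (by omega)
      show G.lab (f i) = glue uu u i
      rw [h1, glue, if_pos hi, hel]
      congr 1; omega
    · have h1 : f i = g (-(i + 1)).toNat := by
        have e1 : i = -(((-(i + 1)).toNat : ℤ) + ((0 : ℕ) : ℤ) + 1) := by omega
        conv_lhs => rw [e1]
        rw [hfl]
      show G.lab (f i) = glue uu u i
      rw [h1, glue, if_neg hi, hg2]

lemma mem_Sinf_of_forall (hE : Finite G.E) (u : ℕ → ℕ) (v : G.V)
    (h : ∀ k, v ∈ Sfin G u k) : v ∈ Sinf G u := by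
  letI : TopologicalSpace G.E := ⊥
  haveI : DiscreteTopology G.E := ⟨rfl⟩
  letI : TopologicalSpace G.V := ⊥
  haveI : DiscreteTopology G.V := ⟨rfl⟩
  set C : ℕ → Set (ℕ → G.E) :=
    fun k => {e | RP G e v ∧ ∀ i < k, G.lab (e i) = u i} with hC
  have hmono : ∀ {j k : ℕ}, j ≤ k → C k ⊆ C j := by
    intro j k hjk e he
    exact ⟨he.1, fun i hi => he.2 i (lt_of_lt_of_le hi hjk)⟩
  have hcl : ∀ k, IsClosed (C k) := by
    intro k
    have hrw : C k = {e : ℕ → G.E | G.src (e 0) = v} ∩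
        ((⋂ i : ℕ, {e : ℕ → G.E | G.tgt (e i) = G.src (e (i + 1))}) ∩
          ⋂ i : ℕ, {e : ℕ → G.E | i < k → G.lab (e i) = u i}) := by
      ext e
      simp only [hC, Set.mem_setOf_eq, Set.mem_inter_iff, Set.mem_iInter, RP]
      tauto
    rw [hrw]
    refine IsClosed.inter ?_ (IsClosed.inter ?_ ?_)
    · exact isClosed_eq ((continuous_of_discreteTopology).comp (continuous_apply 0))
        continuous_const
    · exact isClosed_iInter fun i => isClosed_eq
        ((continuous_of_discreteTopology).comp (continuous_apply i))
        ((continuous_of_discreteTopology).comp (continuous_apply (i + 1)))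
    · refine isClosed_iInter fun i => ?_
      by_cases hik : i < k
      · have : {e : ℕ → G.E | i < k → G.lab (e i) = u i} =
            {e : ℕ → G.E | G.lab (e i) = u i} := by
          ext e; simp [hik]
        rw [this]
        exact isClosed_eq ((continuous_of_discreteTopology).comp (continuous_apply i))
          continuous_const
      · have : {e : ℕ → G.E | i < k → G.lab (e i) = u i} = Set.univ := by
          ext e; simp [hik]
        rw [this]; exact isClosed_univ
  have hne : ∀ k, (C k).Nonempty := by
    intro k
    obtain ⟨e, he, hel⟩ := h k
    exact ⟨e, he, hel⟩
  have hint : (⋂ k, C k).Nonempty := by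
    refine IsCompact.nonempty_iInter_of_directed_nonempty_isCompact_isClosed C
      ?_ hne (fun k => (hcl k).isCompact) hcl
    intro j k
    exact ⟨max j k, hmono (le_max_left j k), hmono (le_max_right j k)⟩
  obtain ⟨e, hmem⟩ := hint
  have hmem' : ∀ k, e ∈ C k := Set.mem_iInter.mp hmem
  exact ⟨e, (hmem' 0).1, fun i => (hmem' (i + 1)).2 i (by omega)⟩

end Statement8Aux

/-- Let `X` be a sofic shift.  For each right ray
`x⁺ = x₁x₂x₃⋯ ∈ X⁺` there exists `n` such that `P∞(x⁺) = P∞(x₁ ⋯ x_k)` for all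
`k ≥ n`. -/
theorem statement8 (X : Set Seq) (hX : IsSofic X)
    (u : ℕ → ℕ) (hu : u ∈ rayPlus X) :
    ∃ n : ℕ, ∀ k : ℕ, n ≤ k →
      predInf X u = predWord X (List.ofFn fun idx : Fin k => u (idx : ℕ)) := by
  obtain ⟨G, hV, hE, hGX⟩ := hX
  subst hGX
  have hanti : ∀ {j k : ℕ}, j ≤ k → Sfin G u k ⊆ Sfin G u j := by
    intro j k hjk v hv
    obtain ⟨e, he, hel⟩ := hv
    exact ⟨e, he, fun i hi => hel i (lt_of_lt_of_le hi hjk)⟩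
  -- find `n` minimizing the cardinality of `Sfin G u n`
  obtain ⟨m, ⟨n, hn⟩, hmin⟩ :=
    (Nat.lt_wfRel.wf).has_min (Set.range fun k => (Sfin G u k).ncard)
      (Set.range_nonempty _)
  have hmin' : ∀ k, (Sfin G u n).ncard ≤ (Sfin G u k).ncard := by
    intro k
    have h1 : ¬ (Sfin G u k).ncard < m := hmin _ ⟨k, rfl⟩
    have h2 : (Sfin G u n).ncard = m := hn
    omega
  have hstab : ∀ k, n ≤ k → Sfin G u k = Sfin G u n := by
    intro k hk
    refine Set.eq_of_subset_of_ncard_le (hanti hk) ?_ (Set.toFinite _)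
    simpa [hn] using hmin' k
  have hSinf : Sinf G u = Sfin G u n := by
    apply Set.Subset.antisymm
    · rintro v ⟨e, he, hel⟩
      exact ⟨e, he, fun i _ => hel i⟩
    · intro v hv
      refine mem_Sinf_of_forall hE u v ?_
      intro k
      rcases le_or_gt n k with h | h
      · rw [hstab k h]; exact hv
      · exact hanti h.le hv
  refine ⟨n, fun k hk => ?_⟩
  ext uu
  rw [mem_predInf_iff u uu, mem_predWord_iff u uu k, hSinf, hstab k hk]

end SymbolicDynamics
end
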